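/- arXiv:2409.18635 — 5 statements merged into one kernel-verified Lean document; each statement's English description precedes it below -/
import Mathlib

section
/- Let A = {a_n} and B = {b_n} be two sequences of positive integers, let ψ: ℕ → (0,1) be a positive function, and let s ∈ (0,1). If Σ_{n=1}^∞ [ a_n (ψ(n)/a_n)^s + b_n (ψ(n)/b_n)^s ] < ∞, then the (1+s)-dimensional Hausdorff measure of W×_{A,B}(ψ) is zero. -/
open MeasureTheory Filter Set

/-- Distance from a real number to the nearest integer. -/
noncomputable def nint (x : ℝ) : ℝ := |x - (round x : ℝ)|


open Metric
open scoped ENNReal NNReal Topology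
set_option maxHeartbeats 1000000
lemma nint_nonneg (x : ℝ) : 0 ≤ nint x := abs_nonneg _

lemma nint_le_half (x : ℝ) : nint x ≤ 1 / 2 := abs_sub_round x

lemma ediam_prod_le (A B : Set ℝ) :
    EMetric.diam (A ×ˢ B) ≤ max (EMetric.diam A) (EMetric.diam B) := by
  apply EMetric.diam_le
  rintro ⟨x1, y1⟩ ⟨hx1, hy1⟩ ⟨x2, y2⟩ ⟨hx2, hy2⟩
  rw [Prod.edist_eq]
  exact max_le_max (EMetric.edist_le_diam_of_mem hx1 hx2)
    (EMetric.edist_le_diam_of_mem hy1 hy2)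

lemma isometry_swap_R : Isometry (Prod.swap : ℝ × ℝ → ℝ × ℝ) := by
  intro p q
  simp [Prod.edist_eq, edist_comm, max_comm, Prod.swap]

lemma ediam_swap_preimage (A : Set (ℝ × ℝ)) :
    EMetric.diam ((Prod.swap : ℝ × ℝ → ℝ × ℝ) ⁻¹' A) = EMetric.diam A := by
  simp only [EMetric.diam]; rw [← Set.image_swap_eq_preimage_swap, isometry_swap_R.ediam_image]

lemma cover_comp {X : Type*} [PseudoEMetricSpace X] {ι : Type*} [Encodable ι]
    {E : Set X} {G : ι → Set X} (hE : E ⊆ ⋃ i, G i) {d : ℝ≥0∞} {e : ℝ} (he : 0 < e)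
    {c : ι → ℝ≥0∞}
    (h : ∀ i, ∃ F : ℕ → Set X, (G i ⊆ ⋃ j, F j) ∧ (∀ j, EMetric.diam (F j) ≤ d) ∧
      ∑' j, EMetric.diam (F j) ^ e ≤ c i) :
    ∃ F : ℕ → Set X, (E ⊆ ⋃ j, F j) ∧ (∀ j, EMetric.diam (F j) ≤ d) ∧
      ∑' j, EMetric.diam (F j) ^ e ≤ ∑' i, c i := by
  choose F' hcov hdiam hsum using h
  set f : ι × ℕ → ℕ := fun x => Encodable.encode x with hf_def
  have hf : Function.Injective f := Encodable.encode_injective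
  set F : ℕ → Set X := Function.extend f (fun x => F' x.1 x.2) (fun _ => ∅) with hF_def
  have hFapp : ∀ x : ι × ℕ, F (f x) = F' x.1 x.2 := fun x => hf.extend_apply _ _ x
  have hFnot : ∀ n, ¬(∃ x, f x = n) → F n = ∅ := by
    intro n hn
    exact Function.extend_apply' _ _ _ hn
  refine ⟨F, ?_, ?_, ?_⟩
  · intro z hz
    obtain ⟨i, hi⟩ := mem_iUnion.mp (hE hz)
    obtain ⟨j, hj⟩ := mem_iUnion.mp (hcov i hi)
    exact mem_iUnion.mpr ⟨f (i, j), by rw [hFapp]; exact hj⟩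
  · intro n
    by_cases hn : ∃ x, f x = n
    · obtain ⟨x, rfl⟩ := hn
      rw [hFapp]; exact hdiam _ _
    · rw [hFnot n hn]; simp [EMetric.diam]
  · have hsupp : Function.support (fun n => EMetric.diam (F n) ^ e) ⊆ Set.range f := by
      intro n hn
      by_contra hc
      have : F n = ∅ := hFnot n (by simpa [Set.range] using hc)
      apply hn
      simp [this, ENNReal.zero_rpow_of_pos he, EMetric.diam]
    calc ∑' n, EMetric.diam (F n) ^ e
        = ∑' x : ι × ℕ, EMetric.diam (F (f x)) ^ e := (hf.tsum_eq hsupp).symm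
      _ = ∑' x : ι × ℕ, EMetric.diam (F' x.1 x.2) ^ e := by
          congr 1; ext x; rw [hFapp]
      _ = ∑' i, ∑' j, EMetric.diam (F' i j) ^ e :=
          ENNReal.tsum_prod (f := fun i j => EMetric.diam (F' i j) ^ e)
      _ ≤ ∑' i, c i := ENNReal.tsum_le_tsum fun i => hsum i

lemma rect_cover_aux {s : ℝ} (hs0 : 0 < s) (hs1 : s < 1) (u v R1 R2 : ℝ)
    (h1 : 0 < R1) (h12 : R1 ≤ R2) :
    ∃ F : ℕ → Set (ℝ × ℝ),
      (Icc (u - R1) (u + R1) ×ˢ Icc (v - R2) (v + R2) ⊆ ⋃ j, F j) ∧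
      (∀ j, EMetric.diam (F j) ≤ ENNReal.ofReal (2 * R1)) ∧
      ∑' j, EMetric.diam (F j) ^ (1 + s) ≤ ENNReal.ofReal (8 * (R2 * R1 ^ s)) := by
  have h2 : 0 < R2 := lt_of_lt_of_le h1 h12
  set m : ℕ := ⌈R2 / R1⌉₊ with hm_def
  have hm1 : 1 ≤ m := Nat.one_le_ceil_iff.mpr (by positivity)
  set F : ℕ → Set (ℝ × ℝ) := fun j =>
    if j < m then Icc (u - R1) (u + R1) ×ˢ Icc (v - R2 + 2 * R1 * j) (v - R2 + 2 * R1 * (j + 1))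
    else ∅ with hF_def
  have hdiam : ∀ j, EMetric.diam (F j) ≤ ENNReal.ofReal (2 * R1) := by
    intro j
    by_cases hj : j < m
    · rw [hF_def]; simp only [if_pos hj]
      refine (ediam_prod_le _ _).trans ?_
      simp only [EMetric.diam]; rw [Real.ediam_Icc, Real.ediam_Icc]
      have e1 : u + R1 - (u - R1) = 2 * R1 := by ring
      have e2 : v - R2 + 2 * R1 * (j + 1) - (v - R2 + 2 * R1 * j) = 2 * R1 := by ring
      rw [e1, e2, max_self]
    · rw [hF_def]; simp only [if_neg hj]; simp [EMetric.diam]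
  refine ⟨F, ?_, hdiam, ?_⟩
  · rintro ⟨x, y⟩ ⟨hx, hy⟩
    simp only [mem_Icc] at hx hy
    set z : ℝ := (y - (v - R2)) / (2 * R1) with hz_def
    have hz0 : 0 ≤ z := by
      apply div_nonneg (by linarith) (by linarith)
    set j : ℕ := min ⌊z⌋₊ (m - 1) with hj_def
    have hjm : j < m := lt_of_le_of_lt (min_le_right _ _) (by omega)
    have hzy : 2 * R1 * z = y - (v - R2) := by
      rw [hz_def]; field_simp
    have hylower : v - R2 + 2 * R1 * j ≤ y := by
      have hj_le : (j : ℝ) ≤ z := by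
        calc (j : ℝ) ≤ (⌊z⌋₊ : ℝ) := by exact_mod_cast min_le_left _ _
        _ ≤ z := Nat.floor_le hz0
      nlinarith [hj_le, hzy]
    have hyupper : y ≤ v - R2 + 2 * R1 * (j + 1) := by
      rcases le_or_gt (⌊z⌋₊ : ℕ) (m - 1) with hc | hc
      · have hj_eq : j = ⌊z⌋₊ := min_eq_left hc
        have hzlt : z < j + 1 := by rw [hj_eq]; exact_mod_cast Nat.lt_floor_add_one z
        nlinarith [hzlt, hzy]
      · have hj_eq : j = m - 1 := min_eq_right (le_of_lt hc)
        have hj1 : (j : ℝ) + 1 = (m : ℝ) := by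
          rw [hj_eq]
          have : (m - 1 : ℕ) + 1 = m := by omega
          exact_mod_cast congrArg (Nat.cast (R := ℝ)) this
        have hmR : R2 ≤ R1 * m := by
          have := Nat.le_ceil (R2 / R1)
          rw [← hm_def] at this
          rw [div_le_iff₀ h1] at this
          linarith [this]
        nlinarith [hmR, hj1, hy.2]
    refine mem_iUnion.mpr ⟨j, ?_⟩
    rw [hF_def]
    simp only [if_pos hjm]
    exact ⟨mem_Icc.mpr hx, mem_Icc.mpr ⟨hylower, hyupper⟩⟩
  · have hzero : ∀ j ∉ Finset.range m, EMetric.diam (F j) ^ (1 + s) = 0 := by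
      intro j hj
      rw [hF_def]
      simp only [if_neg (Nat.not_lt.mpr (by simpa using hj))]
      simp only [EMetric.diam, Metric.ediam_empty]
      exact ENNReal.zero_rpow_of_pos (by linarith)
    rw [tsum_eq_sum hzero]
    have hbound : ∀ j ∈ Finset.range m,
        EMetric.diam (F j) ^ (1 + s) ≤ ENNReal.ofReal ((2 * R1) ^ (1 + s)) := by
      intro j _
      rw [← ENNReal.ofReal_rpow_of_pos (by linarith)]
      exact ENNReal.rpow_le_rpow (hdiam j) (by linarith)
    refine (Finset.sum_le_sum hbound).trans ?_
    rw [Finset.sum_const, Finset.card_range, nsmul_eq_mul]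
    rw [← ENNReal.ofReal_natCast m, ← ENNReal.ofReal_mul (by positivity)]
    apply ENNReal.ofReal_le_ofReal
    -- real arithmetic: m * (2 R1)^(1+s) ≤ 8 R2 R1^s
    have hm_ub : (m : ℝ) ≤ 2 * (R2 / R1) := by
      have h1' : (m : ℝ) < R2 / R1 + 1 := Nat.ceil_lt_add_one (by positivity)
      have : (1:ℝ) ≤ R2 / R1 := (one_le_div h1).mpr h12
      linarith
    have hpow : (2 * R1) ^ (1 + s) ≤ 4 * (R1 * R1 ^ s) := by
      rw [Real.rpow_add (by linarith), Real.rpow_one]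
      have h2s : (2 * R1) ^ s = 2 ^ s * R1 ^ s := Real.mul_rpow (by norm_num) h1.le
      have h2le : (2:ℝ) ^ s ≤ 2 := by
        calc (2:ℝ) ^ s ≤ 2 ^ (1:ℝ) :=
          Real.rpow_le_rpow_of_exponent_le one_le_two hs1.le
        _ = 2 := Real.rpow_one 2
      have hR1s : 0 ≤ R1 ^ s := Real.rpow_nonneg h1.le s
      rw [h2s]
      nlinarith [mul_le_mul_of_nonneg_right h2le hR1s, h1.le,
        mul_le_mul_of_nonneg_left (mul_le_mul_of_nonneg_right h2le hR1s) (by linarith : (0:ℝ) ≤ 2 * R1)]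
    have hR1s : 0 ≤ R1 ^ s := Real.rpow_nonneg h1.le s
    have hm0 : (0:ℝ) ≤ m := Nat.cast_nonneg m
    calc (m : ℝ) * (2 * R1) ^ (1 + s) ≤ (2 * (R2 / R1)) * (4 * (R1 * R1 ^ s)) := by
          apply mul_le_mul hm_ub hpow (by positivity) (by positivity)
      _ = 8 * (R2 * R1 ^ s) := by field_simp; ring

lemma rect_cover {s : ℝ} (hs0 : 0 < s) (hs1 : s < 1) (u v R1 R2 : ℝ)
    (h1 : 0 < R1) (h2 : 0 < R2) :
    ∃ F : ℕ → Set (ℝ × ℝ),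
      (Icc (u - R1) (u + R1) ×ˢ Icc (v - R2) (v + R2) ⊆ ⋃ j, F j) ∧
      (∀ j, EMetric.diam (F j) ≤ ENNReal.ofReal (2 * min R1 R2)) ∧
      ∑' j, EMetric.diam (F j) ^ (1 + s) ≤
        ENNReal.ofReal (8 * (R2 * R1 ^ s + R1 * R2 ^ s)) := by
  have hR1s : 0 ≤ R1 ^ s := Real.rpow_nonneg h1.le s
  have hR2s : 0 ≤ R2 ^ s := Real.rpow_nonneg h2.le s
  rcases le_total R1 R2 with h | h
  · obtain ⟨F, hc, hd, hs'⟩ := rect_cover_aux hs0 hs1 u v R1 R2 h1 h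
    refine ⟨F, hc, ?_, ?_⟩
    · intro j
      exact (hd j).trans (ENNReal.ofReal_le_ofReal (by rw [min_eq_left h]))
    · refine hs'.trans (ENNReal.ofReal_le_ofReal ?_)
      nlinarith [mul_nonneg h1.le hR2s]
  · obtain ⟨F, hc, hd, hs'⟩ := rect_cover_aux hs0 hs1 v u R2 R1 h2 h
    refine ⟨fun j => (Prod.swap : ℝ × ℝ → ℝ × ℝ) ⁻¹' (F j), ?_, ?_, ?_⟩
    · rintro ⟨x, y⟩ ⟨hx, hy⟩
      have : ((y, x) : ℝ × ℝ) ∈ Icc (v - R2) (v + R2) ×ˢ Icc (u - R1) (u + R1) := ⟨hy, hx⟩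
      obtain ⟨j, hj⟩ := mem_iUnion.mp (hc this)
      exact mem_iUnion.mpr ⟨j, hj⟩
    · intro j
      rw [ediam_swap_preimage]
      exact (hd j).trans (ENNReal.ofReal_le_ofReal (by rw [min_eq_right h]))
    · have : ∀ j, EMetric.diam ((Prod.swap : ℝ × ℝ → ℝ × ℝ) ⁻¹' (F j)) ^ (1 + s)
          = EMetric.diam (F j) ^ (1 + s) := by
        intro j; rw [ediam_swap_preimage]
      rw [tsum_congr this]
      refine hs'.trans (ENNReal.ofReal_le_ofReal ?_)
      nlinarith [mul_nonneg h2.le hR1s]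

lemma strip_mem (a : ℕ) (ha : 0 < a) {x r : ℝ} (hx : x ∈ Icc (0:ℝ) 1)
    (h : nint ((a:ℝ) * x) < r) :
    ∃ p : ℕ, p ≤ a ∧ |x - (p:ℝ) / a| ≤ r / a := by
  have ha' : (0:ℝ) < a := by exact_mod_cast ha
  obtain ⟨hx0, hx1⟩ := hx
  have hax0 : (0:ℝ) ≤ (a:ℝ) * x := by positivity
  have hax1 : (a:ℝ) * x ≤ a := by nlinarith
  have h0 : (0:ℤ) ≤ round ((a:ℝ) * x) := by
    rw [round_eq]
    exact Int.le_floor.mpr (by push_cast; linarith)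
  have hub : round ((a:ℝ) * x) ≤ (a:ℤ) := by
    rw [round_eq]
    have : ((a:ℝ) * x + 1 / 2) < (((a:ℤ) + 1 : ℤ) : ℝ) := by push_cast; linarith
    exact Int.lt_add_one_iff.mp (Int.floor_lt.mpr this)
  refine ⟨(round ((a:ℝ) * x)).toNat, ?_, ?_⟩
  · exact_mod_cast Int.toNat_le.mpr hub
  · have hcast : (((round ((a:ℝ) * x)).toNat : ℕ) : ℝ) = ((round ((a:ℝ) * x) : ℤ) : ℝ) := by
      exact_mod_cast congrArg (fun z : ℤ => (z : ℝ)) (Int.toNat_of_nonneg h0)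
    rw [hcast]
    have key : |(a:ℝ) * x - (round ((a:ℝ) * x) : ℤ)| ≤ r := h.le
    have : x - (round ((a:ℝ) * x) : ℤ) / a = ((a:ℝ) * x - (round ((a:ℝ) * x) : ℤ)) / a := by
      field_simp
    rw [this, abs_div, abs_of_pos ha']
    gcongr

noncomputable def qval (s : ℝ) : ℝ := (2:ℝ)⁻¹ / (2:ℝ)⁻¹ ^ s

lemma qval_pos {s : ℝ} : 0 < qval s := by
  unfold qval; positivity

lemma qval_lt_one {s : ℝ} (hs0 : 0 < s) (hs1 : s < 1) : qval s < 1 := by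
  unfold qval
  rw [div_lt_one (by positivity)]
  calc (2:ℝ)⁻¹ = (2:ℝ)⁻¹ ^ (1:ℝ) := (Real.rpow_one _).symm
  _ < (2:ℝ)⁻¹ ^ s := Real.rpow_lt_rpow_of_exponent_gt (by norm_num) (by norm_num) hs1

noncomputable def CC (s : ℝ) : ℝ := 128 * (1 - qval s)⁻¹

lemma sum_ite_le (Y : ℝ≥0∞) (n : ℕ) :
    ∑' i : ℕ, (if i ≤ n then Y else 0) = ((n:ℝ≥0∞) + 1) * Y := by
  rw [tsum_eq_sum (s := Finset.range (n + 1))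
    (by intro i hi; rw [if_neg (by simp at hi; omega)])]
  rw [Finset.sum_congr rfl (fun i hi => if_pos (by simp at hi; omega))]
  rw [Finset.sum_const, Finset.card_range, nsmul_eq_mul]
  push_cast; ring

lemma cover_one {s : ℝ} (hs0 : 0 < s) (hs1 : s < 1) (a b : ℕ) (ha : 0 < a) (hb : 0 < b)
    {ψ : ℝ} (hψ0 : 0 < ψ) (hψ1 : ψ < 1) :
    ∃ F : ℕ → Set (ℝ × ℝ),
      ({p : ℝ × ℝ | p.1 ∈ Icc (0:ℝ) 1 ∧ p.2 ∈ Icc (0:ℝ) 1 ∧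
          nint ((a:ℝ) * p.1) * nint ((b:ℝ) * p.2) < ψ} ⊆ ⋃ j, F j) ∧
      (∀ j, EMetric.diam (F j) ≤ ENNReal.ofReal (6 * Real.sqrt ψ)) ∧
      ∑' j, EMetric.diam (F j) ^ (1 + s) ≤
        ENNReal.ofReal (CC s * ((a:ℝ) * (ψ / a) ^ s + (b:ℝ) * (ψ / b) ^ s)) := by
  have ha' : (1:ℝ) ≤ a := by exact_mod_cast ha
  have hb' : (1:ℝ) ≤ b := by exact_mod_cast hb
  have ha0 : (0:ℝ) < a := by linarith
  have hb0 : (0:ℝ) < b := by linarith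
  -- choice of K
  have hex : ∃ K : ℕ, 1 / ψ ≤ 2 ^ K := by
    obtain ⟨K, hK⟩ := pow_unbounded_of_one_lt (R := ℝ) (1 / ψ) one_lt_two
    exact ⟨K, hK.le⟩
  set K := Nat.find hex with hK_def
  have hK1 : 1 / ψ ≤ 2 ^ K := Nat.find_spec hex
  have hKpos : 0 < K := by
    rcases Nat.eq_zero_or_pos K with h0 | h
    · exfalso
      rw [h0] at hK1
      have : 1 < 1 / ψ := one_lt_one_div hψ0 hψ1
      simp only [pow_zero] at hK1
      linarith
    · exact h
  have hK2 : (2:ℝ) ^ K ≤ 2 / ψ := by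
    obtain ⟨K', hKK'⟩ : ∃ K', K = K' + 1 := ⟨K - 1, by omega⟩
    have hmin := Nat.find_min hex (m := K') (by omega)
    push_neg at hmin
    have h2K' : (2:ℝ) ^ K = 2 * 2 ^ K' := by rw [hKK']; ring
    have : (2:ℝ) ^ K' ≤ 1 / ψ := hmin.le
    rw [h2K']
    calc 2 * (2:ℝ) ^ K' ≤ 2 * (1 / ψ) := by linarith
    _ = 2 / ψ := by ring
  set t : ℕ → ℝ := fun k => (2:ℝ)⁻¹ ^ k with ht_def
  have ht_pos : ∀ k, 0 < t k := fun k => by positivity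
  have ht_mul : ∀ k, t k * 2 ^ k = 1 := by
    intro k
    rw [ht_def]
    rw [← mul_pow]
    norm_num
  have htK : t K ≤ ψ := by
    have h1' : 1 ≤ 2 ^ K * ψ := by
      rw [div_le_iff₀ hψ0] at hK1; linarith
    nlinarith [ht_mul K, ht_pos K, hψ0]
  have htK' : ψ ≤ 2 * t K := by
    have h2' : ψ * 2 ^ K ≤ 2 := by
      rw [le_div_iff₀ hψ0] at hK2; linarith
    nlinarith [ht_mul K, ht_pos K, hψ0, pow_pos (two_pos (α := ℝ)) K]
  set R1 : ℕ → ℝ := fun k => t k / a with hR1_def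
  set R2 : ℕ → ℝ := fun k => min (2 * ψ / t k) 1 / b with hR2_def
  have hR1pos : ∀ k, 0 < R1 k := fun k => by
    have := ht_pos k; rw [hR1_def]; positivity
  have hR2pos : ∀ k, 0 < R2 k := fun k => by
    have h1' : 0 < min (2 * ψ / t k) 1 := lt_min (by positivity) one_pos
    rw [hR2_def]; positivity
  -- dyadic selection
  have sel : ∀ u w : ℝ, nint u * nint w < ψ →
      ∃ k ≤ K, nint u < t k ∧ nint w < min (2 * ψ / t k) 1 := by
    intro u w hprod
    have hu0 := nint_nonneg u
    have hw0 := nint_nonneg w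
    have huh := nint_le_half u
    have hwh := nint_le_half w
    by_cases hA : nint u < t K
    · refine ⟨K, le_rfl, hA, lt_min ?_ (by linarith)⟩
      have h2 : (2:ℝ) ≤ 2 * ψ / t K := by
        rw [le_div_iff₀ (ht_pos K)]
        linarith
      linarith
    · push_neg at hA
      have hex2 : ∃ j, t (j + 1) ≤ nint u := ⟨K, le_trans (by
        have : t (K + 1) = t K * 2⁻¹ := pow_succ _ _
        nlinarith [ht_pos K]) hA⟩
      set k := Nat.find hex2 with hk_def
      have hk1 : t (k + 1) ≤ nint u := Nat.find_spec hex2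
      have hkK : k ≤ K := Nat.find_le (le_trans (by
        have : t (K + 1) = t K * 2⁻¹ := pow_succ _ _
        nlinarith [ht_pos K]) hA)
      have hk2 : nint u < t k := by
        rcases Nat.eq_zero_or_pos k with h0 | hpos
        · rw [h0]
          have : t 0 = 1 := pow_zero _
          linarith [this]
        · obtain ⟨k', hkk'⟩ : ∃ k', k = k' + 1 := ⟨k - 1, by omega⟩
          have hmin' := Nat.find_min hex2 (m := k') (by omega)
          push_neg at hmin'
          rw [hkk']
          exact hmin'
      refine ⟨k, hkK, hk2, lt_min ?_ (by linarith)⟩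
      have htk1 : t (k + 1) = t k * 2⁻¹ := pow_succ _ _
      have hupos : 0 < nint u := lt_of_lt_of_le (by nlinarith [ht_pos k]) hk1
      rw [lt_div_iff₀ (ht_pos k)]
      -- nint w * t k < 2 ψ
      have h5 : t (k + 1) * nint w ≤ nint u * nint w :=
        mul_le_mul_of_nonneg_right hk1 hw0
      nlinarith [h5, hprod, htk1]
  -- the rectangles
  set G : ℕ × ℕ × ℕ → Set (ℝ × ℝ) := fun m =>
    if m.1 ≤ K ∧ m.2.1 ≤ a ∧ m.2.2 ≤ b then
      Icc ((m.2.1 : ℝ) / a - R1 m.1) ((m.2.1 : ℝ) / a + R1 m.1) ×ˢ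
        Icc ((m.2.2 : ℝ) / b - R2 m.1) ((m.2.2 : ℝ) / b + R2 m.1)
    else ∅ with hG_def
  set X : ℕ → ℝ≥0∞ := fun k =>
    ENNReal.ofReal (8 * (R2 k * R1 k ^ s + R1 k * R2 k ^ s)) with hX_def
  set c : ℕ × ℕ × ℕ → ℝ≥0∞ := fun m =>
    if m.1 ≤ K ∧ m.2.1 ≤ a ∧ m.2.2 ≤ b then X m.1 else 0 with hc_def
  have hGcov : {p : ℝ × ℝ | p.1 ∈ Icc (0:ℝ) 1 ∧ p.2 ∈ Icc (0:ℝ) 1 ∧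
      nint ((a:ℝ) * p.1) * nint ((b:ℝ) * p.2) < ψ} ⊆ ⋃ m, G m := by
    rintro ⟨x, y⟩ ⟨hx, hy, hp⟩
    obtain ⟨k, hkK, h1, h2⟩ := sel ((a:ℝ) * x) ((b:ℝ) * y) hp
    obtain ⟨p, hpa, hpx⟩ := strip_mem a ha hx h1
    obtain ⟨q, hqb, hqy⟩ := strip_mem b hb hy h2
    rw [abs_le] at hpx hqy
    refine mem_iUnion.mpr ⟨(k, p, q), ?_⟩
    rw [hG_def]
    simp only [if_pos (⟨hkK, hpa, hqb⟩ : k ≤ K ∧ p ≤ a ∧ q ≤ b)]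
    constructor
    · simp only [mem_Icc]
      constructor <;> [linarith [hpx.1]; linarith [hpx.2]]
    · simp only [mem_Icc]
      have hrb : min (2 * ψ / t k) 1 / b = R2 k := rfl
      rw [hrb] at hqy
      constructor <;> [linarith [hqy.1]; linarith [hqy.2]]
  have hdiam_rect : ∀ k, ENNReal.ofReal (2 * min (R1 k) (R2 k)) ≤
      ENNReal.ofReal (6 * Real.sqrt ψ) := by
    intro k
    apply ENNReal.ofReal_le_ofReal
    have hmin0 : 0 ≤ min (R1 k) (R2 k) := le_min (hR1pos k).le (hR2pos k).le
    have hmin2 : min (R1 k) (R2 k) ^ 2 ≤ R1 k * R2 k := by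
      nlinarith [min_le_left (R1 k) (R2 k), min_le_right (R1 k) (R2 k),
        (hR1pos k).le, (hR2pos k).le]
    have hA : R1 k ≤ t k := div_le_self (ht_pos k).le ha'
    have hB : R2 k ≤ 2 * ψ / t k := by
      have hmn : 0 ≤ min (2 * ψ / t k) 1 := le_min (by positivity) zero_le_one
      calc R2 k ≤ min (2 * ψ / t k) 1 := div_le_self hmn hb'
      _ ≤ 2 * ψ / t k := min_le_left _ _
    have hcancel : t k * (2 * ψ / t k) = 2 * ψ := by
      field_simp [(ht_pos k).ne']
    have hprod : R1 k * R2 k ≤ 2 * ψ := by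
      calc R1 k * R2 k ≤ t k * (2 * ψ / t k) :=
        mul_le_mul hA hB (hR2pos k).le (ht_pos k).le
      _ = 2 * ψ := hcancel
    have hmin_sqrt : min (R1 k) (R2 k) ≤ Real.sqrt (2 * ψ) :=
      Real.le_sqrt_of_sq_le (by linarith)
    have h4 : Real.sqrt (2 * ψ) ≤ 2 * Real.sqrt ψ := by
      calc Real.sqrt (2 * ψ) ≤ Real.sqrt (2 ^ 2 * ψ) :=
        Real.sqrt_le_sqrt (by nlinarith)
      _ = 2 * Real.sqrt ψ := by
        rw [Real.sqrt_mul (by positivity), Real.sqrt_sq (by norm_num)]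
    have hsq0 : 0 ≤ Real.sqrt ψ := Real.sqrt_nonneg ψ
    linarith
  -- per-rectangle covers
  have percover : ∀ m : ℕ × ℕ × ℕ, ∃ F : ℕ → Set (ℝ × ℝ),
      (G m ⊆ ⋃ j, F j) ∧ (∀ j, EMetric.diam (F j) ≤ ENNReal.ofReal (6 * Real.sqrt ψ)) ∧
      ∑' j, EMetric.diam (F j) ^ (1 + s) ≤ c m := by
    rintro ⟨k, p, q⟩
    by_cases hcond : k ≤ K ∧ p ≤ a ∧ q ≤ b
    · obtain ⟨F, h1, h2, h3⟩ := rect_cover hs0 hs1 ((p:ℝ)/a) ((q:ℝ)/b) (R1 k) (R2 k)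
        (hR1pos k) (hR2pos k)
      refine ⟨F, ?_, fun j => (h2 j).trans (hdiam_rect k), ?_⟩
      · rw [hG_def]; simp only [if_pos hcond]; exact h1
      · rw [hc_def]; simp only [if_pos hcond]; exact h3
    · refine ⟨fun _ => ∅, ?_, ?_, ?_⟩
      · rw [hG_def]; simp only [if_neg hcond]; exact empty_subset _
      · intro j; simp [EMetric.diam]
      · rw [hc_def]; simp only [if_neg hcond]
        have : ∀ j : ℕ, EMetric.diam (∅ : Set (ℝ × ℝ)) ^ (1 + s) = 0 := by
          intro j
          simp only [EMetric.diam, Metric.ediam_empty]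
          exact ENNReal.zero_rpow_of_pos (by linarith)
        rw [tsum_congr this]
        simp
  obtain ⟨F, hFcov, hFdiam, hFsum⟩ := cover_comp hGcov (by linarith : (0:ℝ) < 1 + s) percover
  refine ⟨F, hFcov, hFdiam, hFsum.trans ?_⟩
  -- now bound ∑' m, c m
  have hsum_c : ∑' m : ℕ × ℕ × ℕ, c m =
      ∑ k ∈ Finset.range (K + 1), ((a:ℝ≥0∞) + 1) * (((b:ℝ≥0∞) + 1) * X k) := by
    rw [ENNReal.tsum_prod (f := fun k pq => c (k, pq))]
    have hinner : ∀ k : ℕ, (∑' pq : ℕ × ℕ, c (k, pq)) =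
        if k ≤ K then ((a:ℝ≥0∞) + 1) * (((b:ℝ≥0∞) + 1) * X k) else 0 := by
      intro k
      by_cases hk : k ≤ K
      · rw [if_pos hk]
        rw [ENNReal.tsum_prod (f := fun p q => c (k, p, q))]
        have hq : ∀ p : ℕ, (∑' q : ℕ, c (k, p, q)) =
            if p ≤ a then ((b:ℝ≥0∞) + 1) * X k else 0 := by
          intro p
          by_cases hp : p ≤ a
          · rw [if_pos hp]
            have : ∀ q : ℕ, c (k, p, q) = if q ≤ b then X k else 0 := by
              intro q
              simp only [hc_def]
              by_cases hqb : q ≤ b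
              · simp only [if_pos hqb, if_pos (show (k,p,q).1 ≤ K ∧ (k,p,q).2.1 ≤ a ∧ (k,p,q).2.2 ≤ b from ⟨hk, hp, hqb⟩)]
              · simp only [if_neg hqb, if_neg (show ¬((k,p,q).1 ≤ K ∧ (k,p,q).2.1 ≤ a ∧ (k,p,q).2.2 ≤ b) by tauto)]
            rw [tsum_congr this, sum_ite_le]
          · rw [if_neg hp]
            have : ∀ q : ℕ, c (k, p, q) = 0 := by
              intro q
              simp only [hc_def]
              rw [if_neg (show ¬((k,p,q).1 ≤ K ∧ (k,p,q).2.1 ≤ a ∧ (k,p,q).2.2 ≤ b) by tauto)]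
            rw [tsum_congr this]; simp
        rw [tsum_congr hq, sum_ite_le]
      · rw [if_neg hk]
        have : ∀ pq : ℕ × ℕ, c (k, pq) = 0 := by
          rintro ⟨p, q⟩
          simp only [hc_def]
          rw [if_neg (show ¬((k,p,q).1 ≤ K ∧ (k,p,q).2.1 ≤ a ∧ (k,p,q).2.2 ≤ b) by tauto)]
        rw [tsum_congr this]; simp
    rw [tsum_congr hinner]
    rw [tsum_eq_sum (s := Finset.range (K + 1))
      (by intro k hk; rw [if_neg (by simp at hk; omega)])]
    exact Finset.sum_congr rfl (fun k hk => if_pos (by simp at hk; omega))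
  rw [hsum_c]
  -- turn into a real sum
  have hXk_nonneg : ∀ k, 0 ≤ 8 * (R2 k * R1 k ^ s + R1 k * R2 k ^ s) := by
    intro k
    have := (hR1pos k).le
    have := (hR2pos k).le
    have := Real.rpow_nonneg (hR1pos k).le s
    have := Real.rpow_nonneg (hR2pos k).le s
    positivity
  have hterm_eq : ∀ k, ((a:ℝ≥0∞) + 1) * (((b:ℝ≥0∞) + 1) * X k) =
      ENNReal.ofReal (((a:ℝ) + 1) * (((b:ℝ) + 1) * (8 * (R2 k * R1 k ^ s + R1 k * R2 k ^ s)))) := by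
    intro k
    rw [hX_def]
    rw [ENNReal.ofReal_mul (by positivity), ENNReal.ofReal_mul (by positivity)]
    congr 1
    · rw [ENNReal.ofReal_add (by positivity) (by norm_num)]
      simp [ENNReal.ofReal_natCast]
    · congr 1
      rw [ENNReal.ofReal_add (by positivity) (by norm_num)]
      simp [ENNReal.ofReal_natCast]
  rw [Finset.sum_congr rfl (fun k _ => hterm_eq k)]
  rw [← ENNReal.ofReal_sum_of_nonneg (fun k _ => by
    have := hXk_nonneg k; positivity)]
  apply ENNReal.ofReal_le_ofReal
  -- THE REAL INEQUALITY
  set q' := qval s with hq'_def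
  have hq0 : 0 < q' := qval_pos
  have hq1 : q' < 1 := qval_lt_one hs0 hs1
  set D := (1 - q')⁻¹ with hD_def
  have hD0 : 0 < D := by rw [hD_def]; exact inv_pos.mpr (by linarith)
  have tpow : ∀ k : ℕ, t k ^ s = ((2:ℝ)⁻¹ ^ s) ^ k := by
    intro k
    have h1 : t k = ((2:ℝ)⁻¹) ^ k := rfl
    rw [h1, ← Real.rpow_natCast ((2:ℝ)⁻¹) k, ← Real.rpow_mul (by norm_num), mul_comm,
      Real.rpow_mul (by norm_num), Real.rpow_natCast]
  have hdiv1 : ∀ k : ℕ, t k / t k ^ s = q' ^ k := by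
    intro k
    rw [tpow k, hq'_def]
    show ((2:ℝ)⁻¹) ^ k / ((2:ℝ)⁻¹ ^ s) ^ k = _
    rw [← div_pow]
    rfl
  have hdiv2 : ∀ k : ℕ, t k ^ s / t k = q'⁻¹ ^ k := by
    intro k
    rw [tpow k, hq'_def]
    show ((2:ℝ)⁻¹ ^ s) ^ k / ((2:ℝ)⁻¹) ^ k = _
    rw [← div_pow]
    unfold qval
    rw [inv_div]
  have hgeom : ∀ n : ℕ, ∑ k ∈ Finset.range n, q' ^ k ≤ D := by
    intro n
    have hsummable : Summable (fun k : ℕ => q' ^ k) :=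
      summable_geometric_of_lt_one hq0.le hq1
    calc ∑ k ∈ Finset.range n, q' ^ k ≤ ∑' k : ℕ, q' ^ k :=
      hsummable.sum_le_tsum _ (fun i _ => by positivity)
    _ = D := tsum_geometric_of_lt_one hq0.le hq1
  have hsum1 : ∑ k ∈ Finset.range (K+1), t k / t k ^ s ≤ D := by
    rw [Finset.sum_congr rfl (fun k _ => hdiv1 k)]; exact hgeom _
  have hsum2 : ∑ k ∈ Finset.range (K+1), t k ^ s / t k ≤ (t K ^ s / t K) * D := by
    rw [Finset.sum_congr rfl (fun k _ => hdiv2 k)]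
    rw [← Finset.sum_range_reflect]
    have hterm : ∀ j ∈ Finset.range (K+1),
        q'⁻¹ ^ (K + 1 - 1 - j) = (t K ^ s / t K) * q' ^ j := by
      intro j hj
      simp only [Finset.mem_range] at hj
      have hjK : j ≤ K := by omega
      have h1 : K + 1 - 1 - j = K - j := by omega
      have hqne : q' ≠ 0 := ne_of_gt hq0
      have h2 : q'⁻¹ ^ (K - j) = q'⁻¹ ^ K * q' ^ j := by
        rw [inv_pow, inv_pow, pow_sub₀ _ hqne hjK]
        field_simp
      rw [h1, h2, ← hdiv2 K]
    rw [Finset.sum_congr rfl hterm, ← Finset.mul_sum]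
    exact mul_le_mul_of_nonneg_left (hgeom _) (by positivity)
  have htailb : t K ^ s / t K ≤ 2 * (ψ ^ s / ψ) := by
    have h1 : t K ^ s ≤ ψ ^ s := Real.rpow_le_rpow (ht_pos K).le htK hs0.le
    have h2 : 1 / t K ≤ 2 / ψ := by
      rw [div_le_div_iff₀ (ht_pos K) hψ0]
      linarith [htK']
    calc t K ^ s / t K = t K ^ s * (1 / t K) := by ring
    _ ≤ ψ ^ s * (2 / ψ) :=
      mul_le_mul h1 h2 (by positivity) (Real.rpow_nonneg hψ0.le s)
    _ = 2 * (ψ ^ s / ψ) := by ring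
  have hask : (0:ℝ) < (a:ℝ) ^ s := Real.rpow_pos_of_pos ha0 s
  have hbsk : (0:ℝ) < (b:ℝ) ^ s := Real.rpow_pos_of_pos hb0 s
  have hb1 : ∀ k ∈ Finset.range (K+1), (a:ℝ) * b * (R1 k * R2 k ^ s) ≤
      (2*ψ) ^ s * ((b:ℝ) / (b:ℝ) ^ s) * (t k / t k ^ s) := by
    intro k _
    have htsk : (0:ℝ) < t k ^ s := Real.rpow_pos_of_pos (ht_pos k) s
    have hR2b : R2 k ≤ (2 * ψ / t k) / b := by
      have h' : min (2 * ψ / t k) 1 / (b:ℝ) ≤ (2 * ψ / t k) / b := by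
        gcongr
        exact min_le_left _ _
      exact h'
    have hR2s' : R2 k ^ s ≤ ((2 * ψ / t k) / b) ^ s :=
      Real.rpow_le_rpow (hR2pos k).le hR2b hs0.le
    have heq : (a:ℝ) * b * (R1 k * ((2 * ψ / t k) / b) ^ s) =
        (2*ψ) ^ s * ((b:ℝ) / (b:ℝ) ^ s) * (t k / t k ^ s) := by
      rw [Real.div_rpow (by positivity) hb0.le, Real.div_rpow (by positivity) (ht_pos k).le]
      have hR1k : R1 k = t k / a := rfl
      rw [hR1k]
      field_simp
    refine le_trans ?_ (le_of_eq heq)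
    have h8 : R1 k * R2 k ^ s ≤ R1 k * ((2 * ψ / t k) / b) ^ s :=
      mul_le_mul_of_nonneg_left hR2s' (hR1pos k).le
    exact mul_le_mul_of_nonneg_left h8 (by positivity)
  have hb2 : ∀ k ∈ Finset.range (K+1), (a:ℝ) * b * (R2 k * R1 k ^ s) ≤
      2 * ψ * ((a:ℝ) / (a:ℝ) ^ s) * (t k ^ s / t k) := by
    intro k _
    have htsk : (0:ℝ) < t k ^ s := Real.rpow_pos_of_pos (ht_pos k) s
    have hR2b : R2 k ≤ (2 * ψ / t k) / b := by
      have h' : min (2 * ψ / t k) 1 / (b:ℝ) ≤ (2 * ψ / t k) / b := by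
        gcongr
        exact min_le_left _ _
      exact h'
    have hR1s' : R1 k ^ s = t k ^ s / (a:ℝ) ^ s :=
      Real.div_rpow (ht_pos k).le ha0.le s
    have heq : (a:ℝ) * b * (((2 * ψ / t k) / b) * (t k ^ s / (a:ℝ) ^ s)) =
        2 * ψ * ((a:ℝ) / (a:ℝ) ^ s) * (t k ^ s / t k) := by
      field_simp
    rw [hR1s']
    refine le_trans ?_ (le_of_eq heq)
    have h8 : R2 k * (t k ^ s / (a:ℝ) ^ s) ≤ ((2 * ψ / t k) / b) * (t k ^ s / (a:ℝ) ^ s) :=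
      mul_le_mul_of_nonneg_right hR2b (by positivity)
    exact mul_le_mul_of_nonneg_left h8 (by positivity)
  set S1 := ∑ k ∈ Finset.range (K+1), R1 k * R2 k ^ s with hS1_def
  set S2 := ∑ k ∈ Finset.range (K+1), R2 k * R1 k ^ s with hS2_def
  have hS1nn : 0 ≤ S1 := Finset.sum_nonneg (fun k _ =>
    mul_nonneg (hR1pos k).le (Real.rpow_nonneg (hR2pos k).le s))
  have hS2nn : 0 ≤ S2 := Finset.sum_nonneg (fun k _ =>
    mul_nonneg (hR2pos k).le (Real.rpow_nonneg (hR1pos k).le s))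
  set U := ψ ^ s * ((a:ℝ) / (a:ℝ) ^ s) with hU_def
  set V := ψ ^ s * ((b:ℝ) / (b:ℝ) ^ s) with hV_def
  have hU0 : 0 ≤ U := by rw [hU_def]; positivity
  have hV0 : 0 ≤ V := by rw [hV_def]; positivity
  have h2s : (2*ψ) ^ s ≤ 2 * ψ ^ s := by
    rw [Real.mul_rpow (by norm_num) hψ0.le]
    have : (2:ℝ) ^ s ≤ 2 := by
      calc (2:ℝ) ^ s ≤ 2 ^ (1:ℝ) := Real.rpow_le_rpow_of_exponent_le one_le_two hs1.le
      _ = 2 := Real.rpow_one 2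
    nlinarith [Real.rpow_nonneg hψ0.le s]
  have habS1 : (a:ℝ) * b * S1 ≤ 2 * V * D := by
    rw [hS1_def, Finset.mul_sum]
    calc ∑ k ∈ Finset.range (K+1), (a:ℝ) * b * (R1 k * R2 k ^ s)
        ≤ ∑ k ∈ Finset.range (K+1), (2*ψ) ^ s * ((b:ℝ) / (b:ℝ) ^ s) * (t k / t k ^ s) :=
          Finset.sum_le_sum hb1
    _ = (2*ψ) ^ s * ((b:ℝ) / (b:ℝ) ^ s) * ∑ k ∈ Finset.range (K+1), t k / t k ^ s := by
          rw [Finset.mul_sum]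
    _ ≤ (2*ψ) ^ s * ((b:ℝ) / (b:ℝ) ^ s) * D :=
          mul_le_mul_of_nonneg_left hsum1 (by positivity)
    _ ≤ 2 * V * D := by
          rw [hV_def]
          have hbb : (0:ℝ) ≤ (b:ℝ) / (b:ℝ) ^ s := by positivity
          have h9 := mul_le_mul_of_nonneg_right h2s (mul_nonneg hbb hD0.le)
          nlinarith [h9]
  have habS2 : (a:ℝ) * b * S2 ≤ 4 * U * D := by
    rw [hS2_def, Finset.mul_sum]
    calc ∑ k ∈ Finset.range (K+1), (a:ℝ) * b * (R2 k * R1 k ^ s)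
        ≤ ∑ k ∈ Finset.range (K+1), 2 * ψ * ((a:ℝ) / (a:ℝ) ^ s) * (t k ^ s / t k) :=
          Finset.sum_le_sum hb2
    _ = 2 * ψ * ((a:ℝ) / (a:ℝ) ^ s) * ∑ k ∈ Finset.range (K+1), t k ^ s / t k := by
          rw [Finset.mul_sum]
    _ ≤ 2 * ψ * ((a:ℝ) / (a:ℝ) ^ s) * ((t K ^ s / t K) * D) :=
          mul_le_mul_of_nonneg_left hsum2 (by positivity)
    _ ≤ 2 * ψ * ((a:ℝ) / (a:ℝ) ^ s) * ((2 * (ψ ^ s / ψ)) * D) := by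
          apply mul_le_mul_of_nonneg_left
            (mul_le_mul_of_nonneg_right htailb hD0.le) (by positivity)
    _ = 4 * U * D := by
          rw [hU_def]
          field_simp
          ring
  have hLHS_eq : ∑ k ∈ Finset.range (K + 1),
      ((a:ℝ) + 1) * (((b:ℝ) + 1) * (8 * (R2 k * R1 k ^ s + R1 k * R2 k ^ s))) =
      ((a:ℝ) + 1) * ((b:ℝ) + 1) * 8 * (S2 + S1) := by
    rw [hS1_def, hS2_def, ← Finset.sum_add_distrib, Finset.mul_sum]
    exact Finset.sum_congr rfl (fun k _ => by ring)
  rw [hLHS_eq]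
  have hRHS_eq : CC s * ((a:ℝ) * (ψ / a) ^ s + (b:ℝ) * (ψ / b) ^ s) = 128 * D * (U + V) := by
    have hCC : CC s = 128 * D := by rw [hD_def, hq'_def]; rfl
    have hUa : (a:ℝ) * (ψ / a) ^ s = U := by
      rw [hU_def, Real.div_rpow hψ0.le ha0.le]; ring
    have hVb : (b:ℝ) * (ψ / b) ^ s = V := by
      rw [hV_def, Real.div_rpow hψ0.le hb0.le]; ring
    rw [hCC, hUa, hVb]
  rw [hRHS_eq]
  have h4ab : ((a:ℝ) + 1) * ((b:ℝ) + 1) ≤ 4 * ((a:ℝ) * b) := by nlinarith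
  have hW0 : 0 ≤ S2 + S1 := by linarith
  have hkey : ((a:ℝ) + 1) * ((b:ℝ) + 1) * (S2 + S1) ≤ 4 * ((a:ℝ) * b) * (S2 + S1) :=
    mul_le_mul_of_nonneg_right h4ab hW0
  nlinarith [hkey, habS1, habS2, mul_nonneg hU0 hD0.le, mul_nonneg hV0 hD0.le]

theorem stmt2 (a b : ℕ → ℕ) (ha : ∀ n, 0 < a n) (hb : ∀ n, 0 < b n)
    (ψ : ℕ → ℝ) (hψ : ∀ n, ψ n ∈ Ioo (0 : ℝ) 1)
    (s : ℝ) (hs : s ∈ Ioo (0 : ℝ) 1)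
    (hsum : Summable (fun n =>
      (a n : ℝ) * (ψ n / (a n : ℝ)) ^ s + (b n : ℝ) * (ψ n / (b n : ℝ)) ^ s)) :
    μH[1 + s] {p : ℝ × ℝ | p.1 ∈ Icc (0 : ℝ) 1 ∧ p.2 ∈ Icc (0 : ℝ) 1 ∧
        ∃ᶠ n in atTop, nint ((a n : ℝ) * p.1) * nint ((b n : ℝ) * p.2) < ψ n} = 0 := by
  obtain ⟨hs0, hs1⟩ := hs
  set f : ℕ → ℝ := fun n =>
    (a n : ℝ) * (ψ n / (a n : ℝ)) ^ s + (b n : ℝ) * (ψ n / (b n : ℝ)) ^ s with hf_def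
  have hf_nonneg : ∀ n, 0 ≤ f n := by
    intro n
    have h1 : (0:ℝ) < a n := by exact_mod_cast ha n
    have h2 : (0:ℝ) < b n := by exact_mod_cast hb n
    have h3 := (hψ n).1
    have h4 : 0 ≤ (ψ n / (a n : ℝ)) ^ s := Real.rpow_nonneg (by positivity) s
    have h5 : 0 ≤ (ψ n / (b n : ℝ)) ^ s := Real.rpow_nonneg (by positivity) s
    rw [hf_def]
    positivity
  have hCC : 0 < CC s := by
    have hq1 := qval_lt_one hs0 hs1
    unfold CC
    have : 0 < 1 - qval s := by linarith
    positivity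
  -- ψ tends to zero
  have hfz : Tendsto f atTop (𝓝 0) := hsum.tendsto_atTop_zero
  have hψs_le : ∀ n, ψ n ^ s ≤ f n := by
    intro n
    have h1 : (1:ℝ) ≤ a n := by exact_mod_cast ha n
    have h2 : (0:ℝ) < b n := by exact_mod_cast hb n
    have hψ0 := (hψ n).1
    have has : (a n : ℝ) ^ s ≤ (a n : ℝ) := by
      calc (a n : ℝ) ^ s ≤ (a n : ℝ) ^ (1:ℝ) :=
        Real.rpow_le_rpow_of_exponent_le h1 hs1.le
      _ = (a n : ℝ) := Real.rpow_one _
    have hdivA : (a n : ℝ) * (ψ n / (a n : ℝ)) ^ s = ψ n ^ s * ((a n : ℝ) / (a n : ℝ) ^ s) := by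
      rw [Real.div_rpow hψ0.le (by linarith), ]
      ring
    have hge1 : (1:ℝ) ≤ (a n : ℝ) / (a n : ℝ) ^ s := by
      rw [le_div_iff₀ (Real.rpow_pos_of_pos (by linarith) s)]
      linarith [has]
    have hterm2 : 0 ≤ (b n : ℝ) * (ψ n / (b n : ℝ)) ^ s := by
      have : 0 ≤ (ψ n / (b n : ℝ)) ^ s := Real.rpow_nonneg (by positivity) s
      positivity
    have hpsis : 0 ≤ ψ n ^ s := Real.rpow_nonneg hψ0.le s
    rw [hf_def]
    simp only
    rw [hdivA]
    nlinarith [mul_le_mul_of_nonneg_left hge1 hpsis]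
  have hψsz : Tendsto (fun n => ψ n ^ s) atTop (𝓝 0) :=
    squeeze_zero (fun n => Real.rpow_nonneg (hψ n).1.le s) hψs_le hfz
  have hψz : Tendsto ψ atTop (𝓝 0) := by
    have hrec : ∀ n, (ψ n ^ s) ^ (1/s) = ψ n := by
      intro n
      rw [← Real.rpow_mul (hψ n).1.le]
      rw [mul_one_div_cancel (ne_of_gt hs0), Real.rpow_one]
    have hcont : ContinuousAt (fun x : ℝ => x ^ (1/s)) 0 :=
      Real.continuousAt_rpow_const 0 (1/s) (Or.inr (by positivity))
    have := hcont.tendsto.comp hψsz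
    rw [Real.zero_rpow (by positivity : (1:ℝ)/s ≠ 0)] at this
    · convert this using 1
      ext n
      exact (hrec n).symm
  have hsqrt : Tendsto (fun n => 6 * Real.sqrt (ψ n)) atTop (𝓝 0) := by
    have h1 : Tendsto (fun n => Real.sqrt (ψ n)) atTop (𝓝 (Real.sqrt 0)) :=
      (Real.continuous_sqrt.continuousAt.tendsto).comp hψz
    rw [Real.sqrt_zero] at h1
    have := h1.const_mul (6:ℝ)
    rwa [mul_zero] at this
  -- tail sums tend to zero
  have htail : Tendsto (fun N => CC s * ∑' m : ℕ, f (m + N)) atTop (𝓝 0) := by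
    have h1 : Tendsto (fun N => ∑' m : ℕ, f (m + N)) atTop (𝓝 0) :=
      tendsto_sum_nat_add f
    have := h1.const_mul (CC s)
    rwa [mul_zero] at this
  rw [← nonpos_iff_eq_zero]
  refine ENNReal.le_of_forall_pos_le_add fun ε hε _ => ?_
  rw [zero_add]
  rw [MeasureTheory.Measure.hausdorffMeasure_apply]
  apply iSup₂_le
  intro r hr
  obtain ⟨r', hr'0, hr'le⟩ : ∃ r' : ℝ, 0 < r' ∧ ENNReal.ofReal r' ≤ r := by
    rcases eq_or_ne r ⊤ with rfl | hrt
    · exact ⟨1, one_pos, le_top⟩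
    · refine ⟨r.toReal, ENNReal.toReal_pos (ne_of_gt hr) hrt, ?_⟩
      rw [ENNReal.ofReal_toReal hrt]
  have h1ev : ∀ᶠ n in atTop, 6 * Real.sqrt (ψ n) < r' :=
    hsqrt.eventually_lt_const hr'0
  have h2ev : ∀ᶠ N in atTop, CC s * ∑' m : ℕ, f (m + N) < (ε : ℝ) :=
    htail.eventually_lt_const (by exact_mod_cast hε)
  obtain ⟨N1, hN1⟩ := eventually_atTop.mp h1ev
  obtain ⟨N2, hN2⟩ := eventually_atTop.mp h2ev
  set N := max N1 N2 with hN_def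
  set E : ℕ → Set (ℝ × ℝ) := fun n => {p : ℝ × ℝ | p.1 ∈ Icc (0:ℝ) 1 ∧ p.2 ∈ Icc (0:ℝ) 1 ∧
    nint ((a n : ℝ) * p.1) * nint ((b n : ℝ) * p.2) < ψ n} with hE_def
  have hWE : {p : ℝ × ℝ | p.1 ∈ Icc (0 : ℝ) 1 ∧ p.2 ∈ Icc (0 : ℝ) 1 ∧
      ∃ᶠ n in atTop, nint ((a n : ℝ) * p.1) * nint ((b n : ℝ) * p.2) < ψ n} ⊆
      ⋃ m : ℕ, E (m + N) := by
    intro p hp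
    obtain ⟨n, hnN, hlt⟩ := (frequently_atTop.mp hp.2.2) N
    refine mem_iUnion.mpr ⟨n - N, ?_⟩
    have hnn : n - N + N = n := Nat.sub_add_cancel hnN
    rw [hE_def]
    simp only [hnn]
    exact ⟨hp.1, hp.2.1, hlt⟩
  have hper : ∀ m : ℕ, ∃ F : ℕ → Set (ℝ × ℝ), (E (m + N) ⊆ ⋃ j, F j) ∧
      (∀ j, EMetric.diam (F j) ≤ r) ∧
      ∑' j, EMetric.diam (F j) ^ (1 + s) ≤ ENNReal.ofReal (CC s * f (m + N)) := by
    intro m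
    obtain ⟨F, hFc, hFd, hFs⟩ := cover_one hs0 hs1 (a (m+N)) (b (m+N)) (ha _) (hb _)
      (hψ (m+N)).1 (hψ (m+N)).2
    refine ⟨F, hFc, ?_, ?_⟩
    · intro j
      refine (hFd j).trans (le_trans (ENNReal.ofReal_le_ofReal ?_) hr'le)
      exact (hN1 (m + N) (le_trans (le_max_left N1 N2) (Nat.le_add_left N m))).le
    · exact hFs
  obtain ⟨F, hFcov, hFdiam, hFsum⟩ :=
    cover_comp hWE (by linarith : (0:ℝ) < 1 + s) hper
  refine iInf_le_of_le F (iInf_le_of_le hFcov (iInf_le_of_le hFdiam ?_))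
  have hstep1 : ∑' n, (⨆ _ : (F n).Nonempty, EMetric.diam (F n) ^ (1 + s)) ≤
      ∑' n, EMetric.diam (F n) ^ (1 + s) :=
    ENNReal.tsum_le_tsum (fun n => iSup_le fun _ => le_rfl)
  refine hstep1.trans (hFsum.trans ?_)
  have hsummable : Summable (fun m : ℕ => CC s * f (m + N)) :=
    ((summable_nat_add_iff N).mpr hsum).mul_left (CC s)
  have heq : ∑' m : ℕ, ENNReal.ofReal (CC s * f (m + N)) =
      ENNReal.ofReal (∑' m : ℕ, CC s * f (m + N)) :=
    (ENNReal.ofReal_tsum_of_nonneg (fun m => mul_nonneg hCC.le (hf_nonneg _)) hsummable).symm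
  rw [heq]
  have hfin : ∑' m : ℕ, CC s * f (m + N) ≤ (ε : ℝ) := by
    rw [tsum_mul_left]
    exact (hN2 N (le_max_right N1 N2)).le
  calc ENNReal.ofReal (∑' m : ℕ, CC s * f (m + N)) ≤ ENNReal.ofReal (ε : ℝ) :=
    ENNReal.ofReal_le_ofReal hfin
  _ = (ε : ℝ≥0∞) := ENNReal.ofReal_coe_nnreal
end

section
/- Let a, b be positive integers, ρ, η ∈ (0,1), and 0 < s ≤ 1. Define E_{a,b}(ρ,η) = { (x,y) ∈ [0,1]² : ‖ax‖ < ρ and ‖by‖ < η }. Then the (1+s)-dimensional Hausdorff content of E_{a,b}(ρ,η) is at most 64·ρ·η·min{ρ/a, η/b}^{s-1}. -/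
open MeasureTheory Filter Set ENNReal

/-- The `t`-dimensional Hausdorff content of a subset of the plane. -/
noncomputable def hContent2 (t : ℝ) (A : Set (ℝ × ℝ)) : ℝ≥0∞ :=
  ⨅ (U : ℕ → Set (ℝ × ℝ)) (_ : A ⊆ ⋃ i, U i), ∑' i, EMetric.diam (U i) ^ t

lemma hContent2_le_tsum {t : ℝ} (ht : 0 < t) {A : Set (ℝ × ℝ)} {ι : Type} [Countable ι]
    (V : ι → Set (ℝ × ℝ)) (hV : A ⊆ ⋃ i, V i) :
    hContent2 t A ≤ ∑' i, EMetric.diam (V i) ^ t := by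
  obtain ⟨f, hf⟩ := exists_injective_nat ι
  classical
  set U : ℕ → Set (ℝ × ℝ) := fun n => ⋃ (i : ι) (_ : f i = n), V i with hU
  have hUf : ∀ i, U (f i) = V i := by
    intro i
    apply Set.Subset.antisymm
    · exact Set.iUnion₂_subset fun j hj => by rw [hf hj]
    · intro x hx
      exact Set.mem_iUnion₂.2 ⟨i, rfl, hx⟩
  have hcov : A ⊆ ⋃ n, U n := fun x hx => by
    obtain ⟨i, hi⟩ := Set.mem_iUnion.1 (hV hx)
    exact Set.mem_iUnion.2 ⟨f i, (hUf i).symm ▸ hi⟩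
  have hsum : ∑' i, EMetric.diam (V i) ^ t = ∑' n, EMetric.diam (U n) ^ t := by
    have := hf.tsum_eq (f := fun n => EMetric.diam (U n) ^ t) ?_
    · simpa [hUf] using this
    · intro n hn
      simp only [Function.mem_support] at hn
      by_contra hr
      apply hn
      have : U n = ∅ := by
        apply Set.eq_empty_iff_forall_notMem.2
        intro x hx
        obtain ⟨i, hi, _⟩ := Set.mem_iUnion₂.1 hx
        exact hr ⟨i, hi⟩
      rw [this]
      simp [EMetric.diam, EMetric.diam_empty, ENNReal.zero_rpow_of_pos ht]
  rw [hsum, hContent2]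
  exact iInf₂_le U hcov

lemma interval_pick {m u z : ℝ} (hm : 0 < m) (hz0 : 0 ≤ z) (hzu : z ≤ 2 * u)
    (C : ℕ) (hC : u ≤ C * m) (hC1 : 1 ≤ C) :
    ∃ j : Fin C, 2 * m * (j : ℝ) ≤ z ∧ z ≤ 2 * m * (j : ℝ) + 2 * m := by
  set A : ℕ := ⌊z / (2 * m)⌋₊ with hA
  have hm2 : (0:ℝ) < 2 * m := by linarith
  refine ⟨⟨min A (C - 1), by omega⟩, ?_, ?_⟩
  · show 2 * m * ((min A (C-1) : ℕ) : ℝ) ≤ z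
    have h1 : ((min A (C-1) : ℕ) : ℝ) ≤ (A : ℝ) := by exact_mod_cast Nat.cast_le.2 (min_le_left _ _)
    have h2 : (A : ℝ) ≤ z / (2 * m) := Nat.floor_le (by positivity)
    rw [le_div_iff₀ hm2] at h2
    nlinarith
  · show z ≤ 2 * m * ((min A (C-1) : ℕ) : ℝ) + 2 * m
    rcases le_or_gt A (C - 1) with h | h
    · have he : min A (C-1) = A := min_eq_left h
      rw [he]
      have h3 := Nat.lt_floor_add_one (z / (2 * m))
      rw [div_lt_iff₀ hm2, ← hA] at h3
      nlinarith
    · have he : min A (C-1) = C - 1 := min_eq_right h.le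
      rw [he]
      have hc : ((C - 1 : ℕ) : ℝ) = (C : ℝ) - 1 := by
        have h1 : (1:ℕ) ≤ C := hC1
        push_cast [Nat.cast_sub h1]
        ring
      rw [hc]
      nlinarith

lemma strip_pick {n : ℕ} (hn : 0 < n) {x w : ℝ} (hx0 : 0 ≤ x) (hx1 : x ≤ 1)
    (hw : |(n : ℝ) * x - (round ((n:ℝ) * x) : ℝ)| ≤ w) :
    ∃ p : Fin (n + 1), |x - (p : ℝ) / n| ≤ w / n := by
  have hn' : (0:ℝ) < n := by exact_mod_cast hn
  set r : ℤ := round ((n:ℝ) * x) with hr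
  have hnx0 : (0:ℝ) ≤ (n:ℝ) * x := by positivity
  have hnx1 : (n:ℝ) * x ≤ n := by nlinarith
  have hr0 : 0 ≤ r := by
    rw [hr, round_eq]
    exact Int.floor_nonneg.2 (by linarith)
  have hrn : r ≤ (n : ℤ) := by
    rw [hr, round_eq]
    exact Int.le_of_lt_add_one (Int.floor_lt.2 (by push_cast; linarith))
  refine ⟨⟨r.toNat, by omega⟩, ?_⟩
  show |x - ((r.toNat : ℕ) : ℝ) / n| ≤ w / n
  have hcast : ((r.toNat : ℕ) : ℝ) = (r : ℝ) := by
    exact_mod_cast Int.toNat_of_nonneg hr0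
  rw [hcast]
  have heq : x - (r:ℝ) / n = ((n:ℝ) * x - r) / n := by field_simp
  rw [heq, abs_div, abs_of_pos hn']
  gcongr

set_option maxHeartbeats 1000000 in
theorem stmt5 (a b : ℕ) (ha : 0 < a) (hb : 0 < b)
    (ρ η : ℝ) (hρ : ρ ∈ Ioo (0 : ℝ) 1) (hη : η ∈ Ioo (0 : ℝ) 1)
    (s : ℝ) (hs0 : 0 < s) (hs1 : s ≤ 1) :
    hContent2 (1 + s) {p : ℝ × ℝ | p.1 ∈ Icc (0 : ℝ) 1 ∧ p.2 ∈ Icc (0 : ℝ) 1 ∧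
        nint ((a : ℝ) * p.1) < ρ ∧ nint ((b : ℝ) * p.2) < η} ≤
      ENNReal.ofReal (64 * ρ * η * min (ρ / a) (η / b) ^ (s - 1)) := by
  obtain ⟨hρ0, hρ1⟩ := hρ
  obtain ⟨hη0, hη1⟩ := hη
  have ha' : (0:ℝ) < a := by exact_mod_cast ha
  have hb' : (0:ℝ) < b := by exact_mod_cast hb
  set u : ℝ := ρ / a with hu
  set v : ℝ := η / b with hv
  have hu0 : 0 < u := div_pos hρ0 ha'
  have hv0 : 0 < v := div_pos hη0 hb'
  set m : ℝ := min u v with hm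
  have hm0 : 0 < m := lt_min hu0 hv0
  set Cx : ℕ := ⌈u / m⌉₊ with hCx
  set Cy : ℕ := ⌈v / m⌉₊ with hCy
  have hCx1 : 1 ≤ Cx := Nat.one_le_ceil_iff.2 (by positivity)
  have hCy1 : 1 ≤ Cy := Nat.one_le_ceil_iff.2 (by positivity)
  have hCxm : u ≤ Cx * m := by
    calc u = u / m * m := by field_simp
      _ ≤ Cx * m := by nlinarith [Nat.le_ceil (u/m)]
  have hCym : v ≤ Cy * m := by
    calc v = v / m * m := by field_simp
      _ ≤ Cy * m := by nlinarith [Nat.le_ceil (v/m)]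
  set V : Fin (a+1) × Fin (b+1) × Fin Cx × Fin Cy → Set (ℝ × ℝ) :=
    fun w => Icc ((w.1 : ℝ)/a - u + 2*m*(w.2.2.1 : ℝ)) ((w.1 : ℝ)/a - u + 2*m*(w.2.2.1 : ℝ) + 2*m)
      ×ˢ Icc ((w.2.1 : ℝ)/b - v + 2*m*(w.2.2.2 : ℝ)) ((w.2.1 : ℝ)/b - v + 2*m*(w.2.2.2 : ℝ) + 2*m)
    with hV
  have hcov : {p : ℝ × ℝ | p.1 ∈ Icc (0 : ℝ) 1 ∧ p.2 ∈ Icc (0 : ℝ) 1 ∧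
      nint ((a : ℝ) * p.1) < ρ ∧ nint ((b : ℝ) * p.2) < η} ⊆ ⋃ i, V i := by
    rintro ⟨x, y⟩ ⟨⟨hx0, hx1⟩, ⟨hy0, hy1⟩, hax, hby⟩
    obtain ⟨p, hp⟩ := strip_pick ha hx0 hx1 (le_of_lt hax)
    obtain ⟨q, hq⟩ := strip_pick hb hy0 hy1 (le_of_lt hby)
    rw [← hu] at hp
    rw [← hv] at hq
    rw [abs_le] at hp hq
    obtain ⟨j, hj1, hj2⟩ := interval_pick hm0 (z := x - ((p:ℝ)/a - u))
      (by linarith [hp.1]) (by linarith [hp.2]) Cx hCxm hCx1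
    obtain ⟨k, hk1, hk2⟩ := interval_pick hm0 (z := y - ((q:ℝ)/b - v))
      (by linarith [hq.1]) (by linarith [hq.2]) Cy hCym hCy1
    refine Set.mem_iUnion.2 ⟨⟨p, q, j, k⟩, ?_⟩
    refine ⟨⟨by simp only; linarith, by simp only; linarith⟩,
            ⟨by simp only; linarith, by simp only; linarith⟩⟩
  refine (hContent2_le_tsum (by linarith) V hcov).trans ?_
  have hdiam : ∀ w, EMetric.diam (V w) ≤ ENNReal.ofReal (2*m) := by
    intro w
    apply EMetric.diam_le
    rintro ⟨x1, y1⟩ ⟨hx1, hy1⟩ ⟨x2, y2⟩ ⟨hx2, hy2⟩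
    rw [Prod.edist_eq]
    apply max_le
    · calc edist x1 x2 ≤ EMetric.diam (Icc ((w.1 : ℝ)/a - u + 2*m*(w.2.2.1 : ℝ))
            ((w.1 : ℝ)/a - u + 2*m*(w.2.2.1 : ℝ) + 2*m)) :=
          EMetric.edist_le_diam_of_mem hx1 hx2
        _ = ENNReal.ofReal (2*m) := by rw [EMetric.diam, Real.ediam_Icc]; ring_nf
    · calc edist y1 y2 ≤ EMetric.diam (Icc ((w.2.1 : ℝ)/b - v + 2*m*(w.2.2.2 : ℝ))
            ((w.2.1 : ℝ)/b - v + 2*m*(w.2.2.2 : ℝ) + 2*m)) :=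
          EMetric.edist_le_diam_of_mem hy1 hy2
        _ = ENNReal.ofReal (2*m) := by rw [EMetric.diam, Real.ediam_Icc]; ring_nf
  have hterm : ∀ w, EMetric.diam (V w) ^ (1+s) ≤ ENNReal.ofReal ((2*m) ^ (1+s)) := by
    intro w
    rw [← ENNReal.ofReal_rpow_of_pos (by linarith)]
    exact ENNReal.rpow_le_rpow (hdiam w) (by linarith)
  calc ∑' w, EMetric.diam (V w) ^ (1+s)
      ≤ ∑' (_ : Fin (a+1) × Fin (b+1) × Fin Cx × Fin Cy), ENNReal.ofReal ((2*m) ^ (1+s)) :=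
        ENNReal.tsum_le_tsum hterm
    _ = ((a+1) * (b+1) * Cx * Cy : ℕ) * ENNReal.ofReal ((2*m) ^ (1+s)) := by
        have hcard : Fintype.card (Fin (a+1) × Fin (b+1) × Fin Cx × Fin Cy)
            = (a+1) * (b+1) * Cx * Cy := by
          rw [Fintype.card_prod, Fintype.card_prod, Fintype.card_prod, Fintype.card_fin,
            Fintype.card_fin, Fintype.card_fin, Fintype.card_fin]
          ring
        rw [tsum_fintype, Finset.sum_const, Finset.card_univ, hcard, nsmul_eq_mul]
    _ ≤ ENNReal.ofReal (64 * ρ * η * min (ρ / a) (η / b) ^ (s - 1)) := by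
        rw [← ENNReal.ofReal_natCast, ← ENNReal.ofReal_mul (by positivity)]
        apply ENNReal.ofReal_le_ofReal
        have hP : (0:ℝ) < m ^ (s-1) := Real.rpow_pos_of_pos hm0 _
        have h2m : (2*m) ^ (1+s) = 2 ^ (1+s) * m ^ (1+s) :=
          Real.mul_rpow (by norm_num) hm0.le
        have h2 : (2:ℝ) ^ (1+s) ≤ 4 := by
          calc (2:ℝ) ^ (1+s) ≤ 2 ^ (2:ℝ) :=
                Real.rpow_le_rpow_of_exponent_le one_le_two (by linarith)
            _ = 4 := by
                rw [show (2:ℝ) = ((2:ℕ):ℝ) by norm_num, Real.rpow_natCast]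
                norm_num
        have hm1s : m ^ (1+s) = m * m * m ^ (s-1) := by
          rw [show (1+s) = 1 + 1 + (s-1) by ring, Real.rpow_add hm0, Real.rpow_add hm0,
            Real.rpow_one]
        have ha1 : (1:ℝ) ≤ a := by exact_mod_cast ha
        have hb1 : (1:ℝ) ≤ b := by exact_mod_cast hb
        have hau : (a:ℝ) * u = ρ := by rw [hu]; field_simp
        have hbv : (b:ℝ) * v = η := by rw [hv]; field_simp
        have hCC : (Cx:ℝ) * (Cy:ℝ) * (m*m) ≤ 2*(u*v) := by
          rcases le_total u v with h | h
          · have hmu : m = u := hm.trans (min_eq_left h)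
            have hx1 : Cx = 1 := by rw [hCx, hmu, div_self hu0.ne', Nat.ceil_one]
            have hyb : (Cy:ℝ) < v/m + 1 := by
              rw [hCy]; exact_mod_cast Nat.ceil_lt_add_one (by positivity)
            have hd : v/m*m = v := div_mul_cancel₀ v hm0.ne'
            have h1 : (Cy:ℝ) * m ≤ v + m := by
              have := mul_le_mul_of_nonneg_right hyb.le hm0.le
              rw [add_mul, hd, one_mul] at this
              linarith
            have hmv : m ≤ v := hmu.le.trans h
            have h2' : (Cy:ℝ) * m ≤ 2 * v := by linarith
            have h3 : 2*v*m = 2*(u*v) := by rw [hmu]; ring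
            rw [hx1]
            push_cast
            nlinarith [mul_le_mul_of_nonneg_right h2' hm0.le]
          · have hmv : m = v := hm.trans (min_eq_right h)
            have hy1 : Cy = 1 := by rw [hCy, hmv, div_self hv0.ne', Nat.ceil_one]
            have hxb : (Cx:ℝ) < u/m + 1 := by
              rw [hCx]; exact_mod_cast Nat.ceil_lt_add_one (by positivity)
            have hd : u/m*m = u := div_mul_cancel₀ u hm0.ne'
            have h1 : (Cx:ℝ) * m ≤ u + m := by
              have := mul_le_mul_of_nonneg_right hxb.le hm0.le
              rw [add_mul, hd, one_mul] at this
              linarith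
            have hmu : m ≤ u := hmv.le.trans h
            have h2' : (Cx:ℝ) * m ≤ 2 * u := by linarith
            have h3 : 2*u*m = 2*(u*v) := by rw [hmv]; ring
            rw [hy1]
            push_cast
            nlinarith [mul_le_mul_of_nonneg_right h2' hm0.le]
        calc (((a+1) * (b+1) * Cx * Cy : ℕ) : ℝ) * (2*m) ^ (1+s)
            = (((a:ℝ)+1)*((b:ℝ)+1)) * ((Cx:ℝ)*(Cy:ℝ)*(m*m)) * (2 ^ (1+s) * m ^ (s-1)) := by
              rw [h2m, hm1s]; push_cast; ring
          _ ≤ ((2*(a:ℝ))*(2*(b:ℝ))) * (2*(u*v)) * (4 * m ^ (s-1)) := by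
              have c1 : ((a:ℝ)+1)*((b:ℝ)+1) ≤ (2*(a:ℝ))*(2*(b:ℝ)) := by nlinarith
              have c2 : (0:ℝ) ≤ (Cx:ℝ)*(Cy:ℝ)*(m*m) := by positivity
              have c3 : (0:ℝ) ≤ 2 ^ (1+s) * m ^ (s-1) := by positivity
              have c4 : 2 ^ (1+s) * m ^ (s-1) ≤ 4 * m ^ (s-1) := by nlinarith
              have c5 : (0:ℝ) ≤ ((a:ℝ)+1)*((b:ℝ)+1) := by positivity
              have c6 : (0:ℝ) ≤ 2*(u*v) := by positivity
              apply mul_le_mul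
              · apply mul_le_mul c1 hCC c2 (by positivity)
              · exact c4
              · exact c3
              · positivity
          _ = 32 * ((a:ℝ)*u) * ((b:ℝ)*v) * m ^ (s-1) := by ring
          _ = 32 * ρ * η * m ^ (s-1) := by rw [hau, hbv]
          _ ≤ 64 * ρ * η * m ^ (s-1) := by nlinarith [mul_pos (mul_pos hρ0 hη0) hP]
end

section
/- Let s ∈ (0,1). There exists a constant C₁ depending only on s such that for all positive integers a, b and all δ ∈ (0,1), the set E_{a,b}(δ) = { (x,y) ∈ [0,1]² : ‖ax‖·‖by‖ < δ² } satisfies H^{1+s}_∞(E_{a,b}(δ)) ≤ C₁ [ a (δ²/a)^s + b (δ²/b)^s ]. -/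
open MeasureTheory Filter Set ENNReal

lemma tsum_ite_le (P : ℕ → Prop) [DecidablePred P] (X : ℝ≥0∞) (N : ℕ) (h : ∀ m, P m → m < N) :
    (∑' m, if P m then X else 0) ≤ N * X := by
  rw [tsum_eq_sum (s := Finset.range N)
    (fun m hm => by rw [if_neg]; intro hP; exact hm (Finset.mem_range.2 (h m hP)))]
  calc ∑ m ∈ Finset.range N, (if P m then X else 0)
      ≤ ∑ _m ∈ Finset.range N, X := Finset.sum_le_sum (fun i _ => by split <;> simp)
    _ = N * X := by simp [Finset.sum_const, nsmul_eq_mul]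

lemma tsum_ite_le' (C : ℕ → Prop) [DecidablePred C] (Q : Prop) [Decidable Q]
    (P : ℕ → Prop) [DecidablePred P] (hC : ∀ n, C n ↔ (Q ∧ P n))
    (X : ℝ≥0∞) (N : ℕ) (h : ∀ m, P m → m < N) :
    (∑' n, if C n then X else 0) ≤ if Q then (N:ℝ≥0∞) * X else 0 := by
  by_cases hQ : Q
  · rw [if_pos hQ]
    calc (∑' n, if C n then X else 0) ≤ ∑' n, (if P n then X else 0) := by
          apply ENNReal.tsum_le_tsum
          intro n
          by_cases h' : C n
          · rw [if_pos h', if_pos ((hC n).1 h').2]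
          · rw [if_neg h']; exact zero_le
      _ ≤ N * X := tsum_ite_le P X N h
  · rw [if_neg hQ]
    have h0 : ∀ n, (if C n then X else 0) = 0 := fun n => if_neg (fun h' => hQ ((hC n).1 h').1)
    simp [h0]

noncomputable def auxW (a : ℕ) (δ : ℝ) (j : ℕ) : ℝ := 2 * min ((2:ℝ)^(j+1) * δ^2) 1 / a
noncomputable def auxV (b : ℕ) (j : ℕ) : ℝ := 2 / (b * 2^j)
noncomputable def auxC (a b : ℕ) (δ : ℝ) (j : ℕ) : ℝ := min (auxW a δ j) (auxV b j)

open Classical in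
noncomputable def auxSQ (a b : ℕ) (δ : ℝ) : ℕ×ℕ×ℕ×ℕ×ℕ → Set (ℝ×ℝ) := fun (j,k,l,m,n) =>
  if k ≤ a ∧ l ≤ b ∧ (m:ℝ) * auxC a b δ j ≤ auxW a δ j ∧ (n:ℝ) * auxC a b δ j ≤ auxV b j then
    Icc ((k:ℝ)/a - auxW a δ j/2 + m * auxC a b δ j)
        ((k:ℝ)/a - auxW a δ j/2 + m * auxC a b δ j + auxC a b δ j) ×ˢ
    Icc ((l:ℝ)/b - auxV b j/2 + n * auxC a b δ j)
        ((l:ℝ)/b - auxV b j/2 + n * auxC a b δ j + auxC a b δ j)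
  else ∅

lemma diam_sq_le (x0 y0 c : ℝ) :
    EMetric.diam ((Icc x0 (x0+c)) ×ˢ (Icc y0 (y0+c))) ≤ ENNReal.ofReal c := by
  apply EMetric.diam_le
  rintro ⟨p1,p2⟩ ⟨hp1,hp2⟩ ⟨q1,q2⟩ ⟨hq1,hq2⟩
  rw [Prod.edist_eq]
  apply max_le <;> rw [edist_dist] <;> apply ENNReal.ofReal_le_ofReal
  · have := Real.dist_le_of_mem_Icc hp1 hq1; linarith
  · have := Real.dist_le_of_mem_Icc hp2 hq2; linarith

open Classical in
lemma diam_SQ_le (a b : ℕ) {δ s : ℝ} (hs : 0 < s) (hc0 : ∀ j, 0 < auxC a b δ j)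
    (j k l m n : ℕ) :
    EMetric.diam (auxSQ a b δ (j,k,l,m,n)) ^ (1+s) ≤
      (if k ≤ a ∧ l ≤ b ∧ (m:ℝ) * auxC a b δ j ≤ auxW a δ j ∧ (n:ℝ) * auxC a b δ j ≤ auxV b j
       then ENNReal.ofReal (auxC a b δ j ^ (1+s)) else 0) := by
  simp only [auxSQ]
  split
  · rw [← ENNReal.ofReal_rpow_of_pos (hc0 j)]
    refine ENNReal.rpow_le_rpow ?_ (by linarith)
    have h := diam_sq_le ((k:ℝ)/a - auxW a δ j/2 + m * auxC a b δ j)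
      ((l:ℝ)/b - auxV b j/2 + n * auxC a b δ j) (auxC a b δ j)
    exact h
  · rw [show EMetric.diam (∅ : Set (ℝ×ℝ)) = 0 from EMetric.diam_empty, ENNReal.zero_rpow_of_pos (by linarith)]

open Classical in
lemma aux_sum_j (a b : ℕ) {δ s : ℝ} (hs : 0 < s) (hc0 : ∀ j, 0 < auxC a b δ j)
    (hcw : ∀ j, auxC a b δ j ≤ auxW a δ j) (hcv : ∀ j, auxC a b δ j ≤ auxV b j) (j : ℕ) :
    (∑' (k:ℕ) (l:ℕ) (m:ℕ) (n:ℕ), EMetric.diam (auxSQ a b δ (j,k,l,m,n)) ^ (1+s))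
      ≤ ((a+1:ℕ):ℝ≥0∞) * (((b+1:ℕ):ℝ≥0∞) * (((⌊auxW a δ j / auxC a b δ j⌋₊+1 : ℕ):ℝ≥0∞) *
          (((⌊auxV b j / auxC a b δ j⌋₊+1 : ℕ):ℝ≥0∞) * ENNReal.ofReal ((auxC a b δ j)^(1+s))))) := by
  set c := auxC a b δ j
  set X := ENNReal.ofReal ((auxC a b δ j)^(1+s)) with hX
  set N1 : ℕ := ⌊auxW a δ j / auxC a b δ j⌋₊+1 with hN1
  set N2 : ℕ := ⌊auxV b j / auxC a b δ j⌋₊+1 with hN2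
  have bndn : ∀ n : ℕ, (n:ℝ) * auxC a b δ j ≤ auxV b j → n < N2 := by
    intro n hn
    refine Nat.lt_succ_of_le (Nat.le_floor ?_)
    rw [le_div_iff₀ (hc0 j)]; exact hn
  have bndm : ∀ m : ℕ, (m:ℝ) * auxC a b δ j ≤ auxW a δ j → m < N1 := by
    intro m hm
    refine Nat.lt_succ_of_le (Nat.le_floor ?_)
    rw [le_div_iff₀ (hc0 j)]; exact hm
  calc (∑' (k:ℕ) (l:ℕ) (m:ℕ) (n:ℕ), EMetric.diam (auxSQ a b δ (j,k,l,m,n)) ^ (1+s))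
      ≤ ∑' (k:ℕ) (l:ℕ) (m:ℕ), (if k ≤ a ∧ l ≤ b ∧ (m:ℝ) * auxC a b δ j ≤ auxW a δ j
          then (N2:ℝ≥0∞) * X else 0) := by
        refine ENNReal.tsum_le_tsum (fun k => ENNReal.tsum_le_tsum (fun l =>
          ENNReal.tsum_le_tsum (fun m => ?_)))
        calc (∑' (n:ℕ), EMetric.diam (auxSQ a b δ (j,k,l,m,n)) ^ (1+s))
            ≤ ∑' (n:ℕ), (if k ≤ a ∧ l ≤ b ∧ (m:ℝ) * auxC a b δ j ≤ auxW a δ j ∧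
                (n:ℝ) * auxC a b δ j ≤ auxV b j then X else 0) :=
              ENNReal.tsum_le_tsum (fun n => diam_SQ_le a b hs hc0 j k l m n)
          _ ≤ _ := tsum_ite_le' (fun n => k ≤ a ∧ l ≤ b ∧ (m:ℝ) * auxC a b δ j ≤ auxW a δ j ∧
                (n:ℝ) * auxC a b δ j ≤ auxV b j)
              (k ≤ a ∧ l ≤ b ∧ (m:ℝ) * auxC a b δ j ≤ auxW a δ j)
              (fun n => (n:ℝ) * auxC a b δ j ≤ auxV b j) (fun n => by tauto) X N2 bndn
    _ ≤ ∑' (k:ℕ) (l:ℕ), (if k ≤ a ∧ l ≤ b then (N1:ℝ≥0∞) * ((N2:ℝ≥0∞) * X) else 0) := by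
        refine ENNReal.tsum_le_tsum (fun k => ENNReal.tsum_le_tsum (fun l => ?_))
        exact tsum_ite_le' (fun m => k ≤ a ∧ l ≤ b ∧ (m:ℝ) * auxC a b δ j ≤ auxW a δ j)
          (k ≤ a ∧ l ≤ b) (fun m => (m:ℝ) * auxC a b δ j ≤ auxW a δ j)
          (fun m => by tauto) ((N2:ℝ≥0∞) * X) N1 bndm
    _ ≤ ∑' (k:ℕ), (if k ≤ a then ((b+1:ℕ):ℝ≥0∞) * ((N1:ℝ≥0∞) * ((N2:ℝ≥0∞) * X)) else 0) := by
        refine ENNReal.tsum_le_tsum (fun k => ?_)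
        exact tsum_ite_le' (fun l => k ≤ a ∧ l ≤ b) (k ≤ a) (fun l => l ≤ b)
          (fun l => by tauto) ((N1:ℝ≥0∞) * ((N2:ℝ≥0∞) * X)) (b+1) (fun l hl => by omega)
    _ ≤ ((a+1:ℕ):ℝ≥0∞) * (((b+1:ℕ):ℝ≥0∞) * ((N1:ℝ≥0∞) * ((N2:ℝ≥0∞) * X))) :=
        tsum_ite_le (fun k => k ≤ a) (((b+1:ℕ):ℝ≥0∞) * ((N1:ℝ≥0∞) * ((N2:ℝ≥0∞) * X)))
          (a+1) (fun k hk => by omega)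

lemma ennreal_tsum_split (f : ℕ → ℝ≥0∞) (k : ℕ) :
    ∑' j, f j ≤ (∑ j ∈ Finset.range k, f j) + ∑' i, f (i + k) := by
  classical
  have h1 : ∀ j, f j ≤ (if j < k then f j else 0) + (if k ≤ j then f j else 0) := by
    intro j; by_cases h : j < k
    · simp [h, Nat.not_le.2 h]
    · simp [h, Nat.not_lt.1 h]
  have hhead : (∑' j, (if j < k then f j else 0)) = ∑ j ∈ Finset.range k, f j := by
    rw [tsum_eq_sum (s := Finset.range k)
      (fun j hj => if_neg (fun h => hj (Finset.mem_range.2 h)))]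
    exact Finset.sum_congr rfl (fun j hj => if_pos (Finset.mem_range.1 hj))
  have htail : (∑' j, (if k ≤ j then f j else 0)) = ∑' i, f (i + k) := by
    have hinj : Function.Injective (fun i : ℕ => i + k) := fun i i' h => by simpa using h
    have hsupp : Function.support (fun j => if k ≤ j then f j else 0)
        ⊆ Set.range (fun i : ℕ => i + k) := by
      intro j hj
      by_cases h : k ≤ j
      · exact ⟨j - k, by simp; omega⟩
      · exact absurd (if_neg h) hj
    have heq := hinj.tsum_eq hsupp
    rw [← heq]
    exact tsum_congr (fun i => if_pos (by omega))
  calc ∑' j, f j ≤ ∑' j, ((if j < k then f j else 0) + (if k ≤ j then f j else 0)) :=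
        ENNReal.tsum_le_tsum h1
    _ = (∑' j, (if j < k then f j else 0)) + ∑' j, (if k ≤ j then f j else 0) := ENNReal.tsum_add
    _ = (∑ j ∈ Finset.range k, f j) + ∑' i, f (i + k) := by rw [hhead, htail]

lemma auxW_pos {a : ℕ} (ha : 0 < a) {δ : ℝ} (hδ : 0 < δ) (j : ℕ) : 0 < auxW a δ j := by
  have : (0:ℝ) < a := by exact_mod_cast ha
  have h1 : (0:ℝ) < min ((2:ℝ)^(j+1) * δ^2) 1 := lt_min (by positivity) one_pos
  unfold auxW; positivity

lemma auxV_pos {b : ℕ} (hb : 0 < b) (j : ℕ) : 0 < auxV b j := by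
  have : (0:ℝ) < b := by exact_mod_cast hb
  unfold auxV; positivity

lemma auxC_pos {a b : ℕ} (ha : 0 < a) (hb : 0 < b) {δ : ℝ} (hδ : 0 < δ) (j : ℕ) :
    0 < auxC a b δ j := lt_min (auxW_pos ha hδ j) (auxV_pos hb j)

lemma aux_real_j (a b : ℕ) (ha : 0 < a) (hb : 0 < b) {δ s : ℝ} (hδ0 : 0 < δ) (hs0 : 0 < s) (j : ℕ) :
    ((a:ℝ)+1)*(((b:ℝ)+1)*(((⌊auxW a δ j/auxC a b δ j⌋₊:ℝ)+1)*(((⌊auxV b j/auxC a b δ j⌋₊:ℝ)+1)*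
        (auxC a b δ j^(1+s)))))
      ≤ 16*a*b*(auxW a δ j * auxV b j^s + auxV b j * auxW a δ j^s) := by
  have ha1 : (1:ℝ) ≤ a := by exact_mod_cast ha
  have hb1 : (1:ℝ) ≤ b := by exact_mod_cast hb
  have hw0 : 0 < auxW a δ j := auxW_pos ha hδ0 j
  have hv0 : 0 < auxV b j := auxV_pos hb j
  have hc0 : 0 < auxC a b δ j := auxC_pos ha hb hδ0 j
  have hcw : auxC a b δ j ≤ auxW a δ j := min_le_left _ _
  have hcv : auxC a b δ j ≤ auxV b j := min_le_right _ _
  set w := auxW a δ j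
  set v := auxV b j
  set c := auxC a b δ j
  have hfl1 : (⌊w/c⌋₊:ℝ)+1 ≤ 2*(w/c) := by
    have h1 : (⌊w/c⌋₊:ℝ) ≤ w/c := Nat.floor_le (by positivity)
    have h2 : 1 ≤ w/c := (one_le_div hc0).2 hcw
    linarith
  have hfl2 : (⌊v/c⌋₊:ℝ)+1 ≤ 2*(v/c) := by
    have h1 : (⌊v/c⌋₊:ℝ) ≤ v/c := Nat.floor_le (by positivity)
    have h2 : 1 ≤ v/c := (one_le_div hc0).2 hcv
    linarith
  have key : (w/c)*((v/c)*(c^(1+s))) ≤ w*v^s + v*w^s := by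
    rcases le_total w v with h | h
    · have hcc : c = w := min_eq_left h
      rw [hcc, div_self hw0.ne', one_mul]
      have hpow : w^(1+s) = w * w^s := by rw [Real.rpow_add hw0, Real.rpow_one]
      rw [hpow]
      have heq : v/w*(w*w^s) = v*w^s := by field_simp
      rw [heq]
      have : 0 ≤ w*v^s := by positivity
      linarith
    · have hcc : c = v := min_eq_right h
      rw [hcc, div_self hv0.ne', one_mul]
      have hpow : v^(1+s) = v * v^s := by rw [Real.rpow_add hv0, Real.rpow_one]
      have heq : w/v*(v^(1+s)) = w*v^s := by rw [hpow]; field_simp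
      rw [heq]
      have : 0 ≤ v*w^s := by positivity
      linarith
  calc ((a:ℝ)+1)*(((b:ℝ)+1)*(((⌊w/c⌋₊:ℝ)+1)*(((⌊v/c⌋₊:ℝ)+1)*(c^(1+s)))))
      ≤ (2*a)*((2*b)*((2*(w/c))*((2*(v/c))*(c^(1+s))))) := by
        have hcp : (0:ℝ) ≤ c^(1+s) := Real.rpow_nonneg hc0.le _
        gcongr <;> first | positivity | linarith
    _ = 16*((a:ℝ)*b)*((w/c)*((v/c)*(c^(1+s)))) := by ring
    _ ≤ 16*((a:ℝ)*b)*(w*v^s + v*w^s) := by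
        apply mul_le_mul_of_nonneg_left key (by positivity)
    _ = 16*(a:ℝ)*b*(w*v^s + v*w^s) := by ring

lemma rpow_pow_comm (x : ℝ) (hx : 0 ≤ x) (n : ℕ) (s : ℝ) : (x ^ n) ^ s = (x ^ s) ^ n := by
  rw [← Real.rpow_natCast x n, ← Real.rpow_mul hx, mul_comm, Real.rpow_mul hx, Real.rpow_natCast]

lemma ofReal_inv_one_sub {x : ℝ} (h0 : 0 ≤ x) (h1 : x < 1) :
    (1 - ENNReal.ofReal x)⁻¹ = ENNReal.ofReal ((1-x)⁻¹) := by
  rw [← ENNReal.ofReal_one, ← ENNReal.ofReal_sub _ h0, ENNReal.ofReal_inv_of_pos (by linarith)]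

lemma tsum_geo_ofReal {r : ℝ} (h0 : 0 ≤ r) (h1 : r < 1) (K : ℝ) (hK : 0 ≤ K) :
    ∑' (i:ℕ), ENNReal.ofReal (K * r^i) ≤ ENNReal.ofReal (K/(1-r)) := by
  have h2 : ∀ i:ℕ, ENNReal.ofReal (K * r^i) = ENNReal.ofReal K * (ENNReal.ofReal r)^i := by
    intro i
    rw [ENNReal.ofReal_mul hK, ENNReal.ofReal_pow h0]
  rw [tsum_congr h2, ENNReal.tsum_mul_left, ENNReal.tsum_geometric,
    ofReal_inv_one_sub h0 h1, ← ENNReal.ofReal_mul hK, div_eq_mul_inv]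

lemma bound_T2 {s : ℝ} (hs0 : 0 < s) (hs1 : s < 1) (a b : ℕ) (ha : 0 < a) (hb : 0 < b)
    {δ : ℝ} (hδ0 : 0 < δ) (j : ℕ) :
    16*(a:ℝ)*b*(auxV b j * auxW a δ j^s) ≤ 128 * ((a:ℝ)*(δ^2/a)^s) * ((2:ℝ)^s/2)^j := by
  have haR : (0:ℝ) < a := by exact_mod_cast ha
  have hbR : (0:ℝ) < b := by exact_mod_cast hb
  have hW0 : 0 ≤ auxW a δ j := (auxW_pos ha hδ0 j).le
  have hW : auxW a δ j ≤ (4*δ^2/a)*2^j := by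
    unfold auxW
    have h1 : min ((2:ℝ)^(j+1) * δ^2) 1 ≤ 2^(j+1)*δ^2 := min_le_left _ _
    have h2 : (2:ℝ)^(j+1) = 2*2^j := by ring
    rw [div_le_iff₀ haR]
    calc 2 * min ((2:ℝ)^(j+1) * δ^2) 1 ≤ 2*((2:ℝ)^(j+1)*δ^2) := by linarith
      _ = (4*δ^2/a)*2^j*a := by field_simp; ring
  have hWs : auxW a δ j^s ≤ (4*(δ^2/a)^s) * ((2:ℝ)^s)^j := by
    calc auxW a δ j^s ≤ ((4*δ^2/a)*2^j)^s := Real.rpow_le_rpow hW0 hW hs0.le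
      _ = (4*δ^2/a)^s * ((2:ℝ)^j)^s := Real.mul_rpow (by positivity) (by positivity)
      _ = (4*(δ^2/a))^s * ((2:ℝ)^s)^j := by
          rw [rpow_pow_comm 2 (by norm_num) j s, mul_div_assoc]
      _ ≤ (4*(δ^2/a)^s) * ((2:ℝ)^s)^j := by
          have h4 : (4:ℝ)^s ≤ 4 := by
            calc (4:ℝ)^s ≤ (4:ℝ)^(1:ℝ) := Real.rpow_le_rpow_of_exponent_le (by norm_num) hs1.le
              _ = 4 := Real.rpow_one 4
          have h5 : (4*(δ^2/a))^s = 4^s*(δ^2/a)^s := Real.mul_rpow (by norm_num) (by positivity)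
          rw [h5]
          have h6 : (0:ℝ) ≤ (δ^2/a)^s := Real.rpow_nonneg (by positivity) _
          have h7 : (0:ℝ) ≤ ((2:ℝ)^s)^j := by positivity
          exact mul_le_mul_of_nonneg_right (mul_le_mul_of_nonneg_right h4 h6) h7
  have hV : auxV b j = 2/((b:ℝ)*2^j) := rfl
  have h2j : (0:ℝ) < 2^j := by positivity
  calc 16*(a:ℝ)*b*(auxV b j * auxW a δ j^s)
      = (32*(a:ℝ)/2^j) * auxW a δ j^s := by rw [hV]; field_simp; ring
    _ ≤ (32*(a:ℝ)/2^j) * ((4*(δ^2/a)^s) * ((2:ℝ)^s)^j) := by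
        apply mul_le_mul_of_nonneg_left hWs (by positivity)
    _ = 128 * ((a:ℝ)*(δ^2/a)^s) * (((2:ℝ)^s)^j/2^j) := by ring
    _ = 128 * ((a:ℝ)*(δ^2/a)^s) * ((2:ℝ)^s/2)^j := by rw [div_pow]

lemma auxV_eq (b : ℕ) (hb : 0 < b) (j : ℕ) : auxV b j = (2/(b:ℝ))*((2:ℝ)⁻¹)^j := by
  have hbR : (0:ℝ) < b := by exact_mod_cast hb
  unfold auxV
  rw [inv_pow]
  field_simp

lemma auxVs (b : ℕ) (hb : 0 < b) {s : ℝ} (j : ℕ) :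
    auxV b j ^ s = (2/(b:ℝ))^s * (((2:ℝ)⁻¹)^s)^j := by
  have hbR : (0:ℝ) < b := by exact_mod_cast hb
  rw [auxV_eq b hb j, Real.mul_rpow (by positivity) (by positivity),
    rpow_pow_comm 2⁻¹ (by norm_num) j s]

lemma bound_T1 {s : ℝ} (hs0 : 0 < s) (a b : ℕ) (ha : 0 < a) (hb : 0 < b)
    {δ : ℝ} (hδ0 : 0 < δ) (j : ℕ) :
    16*(a:ℝ)*b*(auxW a δ j * auxV b j^s)
      ≤ 64*((b:ℝ)*(2/(b:ℝ))^s)*δ^2*(2*((2:ℝ)⁻¹)^s)^j := by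
  have haR : (0:ℝ) < a := by exact_mod_cast ha
  have hbR : (0:ℝ) < b := by exact_mod_cast hb
  have hW : auxW a δ j ≤ (4*δ^2/a)*2^j := by
    unfold auxW
    have h1 : min ((2:ℝ)^(j+1) * δ^2) 1 ≤ 2^(j+1)*δ^2 := min_le_left _ _
    rw [div_le_iff₀ haR]
    have h2 : (2:ℝ)^(j+1) = 2*2^j := by ring
    calc 2 * min ((2:ℝ)^(j+1) * δ^2) 1 ≤ 2*((2:ℝ)^(j+1)*δ^2) := by linarith
      _ = (4*δ^2/a)*2^j*a := by field_simp; ring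
  have hVs0 : 0 ≤ auxV b j ^ s := Real.rpow_nonneg (auxV_pos hb j).le _
  calc 16*(a:ℝ)*b*(auxW a δ j * auxV b j^s)
      ≤ 16*(a:ℝ)*b*(((4*δ^2/a)*2^j) * auxV b j^s) := by
        apply mul_le_mul_of_nonneg_left _ (by positivity)
        exact mul_le_mul_of_nonneg_right hW hVs0
    _ = 16*(a:ℝ)*b*(((4*δ^2/a)*2^j) * ((2/(b:ℝ))^s * (((2:ℝ)⁻¹)^s)^j)) := by
        rw [auxVs b hb]
    _ = 64*((b:ℝ)*(2/(b:ℝ))^s)*δ^2*(2^j*(((2:ℝ)⁻¹)^s)^j) := by field_simp; ring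
    _ = 64*((b:ℝ)*(2/(b:ℝ))^s)*δ^2*(2*((2:ℝ)⁻¹)^s)^j := by rw [mul_pow]

lemma bound_T1' {s : ℝ} (hs0 : 0 < s) (a b : ℕ) (ha : 0 < a) (hb : 0 < b)
    {δ : ℝ} (hδ0 : 0 < δ) (j : ℕ) :
    16*(a:ℝ)*b*(auxW a δ j * auxV b j^s)
      ≤ 32*((b:ℝ)*(2/(b:ℝ))^s)*(((2:ℝ)⁻¹)^s)^j := by
  have haR : (0:ℝ) < a := by exact_mod_cast ha
  have hbR : (0:ℝ) < b := by exact_mod_cast hb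
  have hW : auxW a δ j ≤ 2/a := by
    unfold auxW
    have h1 : min ((2:ℝ)^(j+1) * δ^2) 1 ≤ 1 := min_le_right _ _
    rw [div_le_div_iff₀ haR haR]
    nlinarith
  have hVs0 : 0 ≤ auxV b j ^ s := Real.rpow_nonneg (auxV_pos hb j).le _
  calc 16*(a:ℝ)*b*(auxW a δ j * auxV b j^s)
      ≤ 16*(a:ℝ)*b*((2/a) * auxV b j^s) := by
        apply mul_le_mul_of_nonneg_left _ (by positivity)
        exact mul_le_mul_of_nonneg_right hW hVs0
    _ = 16*(a:ℝ)*b*((2/a) * ((2/(b:ℝ))^s * (((2:ℝ)⁻¹)^s)^j)) := by rw [auxVs b hb]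
    _ = 32*((b:ℝ)*(2/(b:ℝ))^s)*(((2:ℝ)⁻¹)^s)^j := by field_simp; ring

lemma mem_Icc_floor {t x0 c : ℝ} (hc : 0 < c) (h1 : x0 < t) :
    ∃ m : ℕ, (m:ℝ) * c ≤ t - x0 ∧ t ∈ Icc (x0 + m * c) (x0 + m * c + c) := by
  set m := ⌊(t - x0)/c⌋₊ with hm
  have ht0 : 0 ≤ t - x0 := by linarith
  have hm1 : (m:ℝ)*c ≤ t - x0 := by
    have h := Nat.floor_le (div_nonneg ht0 hc.le)
    calc (m:ℝ)*c ≤ ((t-x0)/c)*c := mul_le_mul_of_nonneg_right h hc.le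
      _ = t - x0 := div_mul_cancel₀ _ hc.ne'
  have hm2 : t - x0 < ((m:ℝ)+1)*c := by
    have h := Nat.lt_floor_add_one ((t-x0)/c)
    calc t - x0 = ((t-x0)/c)*c := (div_mul_cancel₀ _ hc.ne').symm
      _ < ((m:ℝ)+1)*c := by
        apply mul_lt_mul_of_pos_right _ hc
        exact_mod_cast h
  exact ⟨m, hm1, ⟨by linarith, by nlinarith⟩⟩

/-- The covering lemma: the set is covered by the squares. -/
lemma aux_cover (a b : ℕ) (ha : 0 < a) (hb : 0 < b) {δ : ℝ} (hδ0 : 0 < δ) (hδ1 : δ < 1) :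
    {p : ℝ × ℝ | p.1 ∈ Icc (0:ℝ) 1 ∧ p.2 ∈ Icc (0:ℝ) 1 ∧ nint (a * p.1) * nint (b * p.2) < δ^2}
      ⊆ ⋃ i, auxSQ a b δ i := by
  rintro ⟨x, y⟩ ⟨hx, hy, hxy⟩
  have ha0 : (0:ℝ) < a := by exact_mod_cast ha
  have hb0 : (0:ℝ) < b := by exact_mod_cast hb
  have hd0 : (0:ℝ) < δ^2 := by positivity
  have hax0 : 0 ≤ nint (a*x) := abs_nonneg _
  have haxh : nint (a*x) ≤ 1/2 := abs_sub_round _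
  have hby0 : 0 ≤ nint (b*y) := abs_nonneg _
  have hbyh : nint (b*y) ≤ 1/2 := abs_sub_round _
  -- find the dyadic level j
  have hex : ∃ n : ℕ, nint ((a:ℝ)*x) < 2^(n+1)*δ^2 := by
    obtain ⟨n, hn⟩ := pow_unbounded_of_one_lt (1/δ^2) (one_lt_two (α := ℝ))
    refine ⟨n, ?_⟩
    rw [div_lt_iff₀ hd0] at hn
    have h2 : (2:ℝ)^(n+1) = 2*2^n := by ring
    nlinarith [pow_pos (zero_lt_two (α := ℝ)) n]
  set j := Nat.find hex with hjdef
  have hj : nint ((a:ℝ)*x) < 2^(j+1)*δ^2 := Nat.find_spec hex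
  -- y-side bound at level j
  have hby2 : nint ((b:ℝ)*y) * 2^j < 1 := by
    rcases Nat.eq_zero_or_pos j with h0 | hpos
    · rw [h0]; norm_num; linarith
    · have hmin : ¬ (nint ((a:ℝ)*x) < 2^((j-1)+1)*δ^2) := Nat.find_min hex (by omega)
      rw [Nat.sub_add_cancel hpos] at hmin
      push_neg at hmin
      have h1 : nint ((b:ℝ)*y) * ((2:ℝ)^j*δ^2) ≤ nint ((b:ℝ)*y) * nint ((a:ℝ)*x) :=
        mul_le_mul_of_nonneg_left hmin hby0
      have hp : (0:ℝ) < 2^j := by positivity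
      nlinarith
  -- the integer k
  have haxnn : 0 ≤ (a:ℝ)*x := mul_nonneg ha0.le hx.1
  have hr0 : 0 ≤ round ((a:ℝ)*x) := by
    rw [round_eq]; exact Int.floor_nonneg.2 (by linarith)
  have hra : round ((a:ℝ)*x) ≤ (a:ℤ) := by
    rw [round_eq]
    have h1 : (a:ℝ)*x + 1/2 ≤ (a:ℝ) + 1/2 := by nlinarith [hx.2]
    calc ⌊(a:ℝ)*x + 1/2⌋ ≤ ⌊(a:ℝ) + 1/2⌋ := Int.floor_le_floor h1
      _ = a := Int.floor_eq_iff.2 ⟨by push_cast; linarith, by push_cast; linarith⟩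
  set k := (round ((a:ℝ)*x)).toNat with hkdef
  have hkr : ((k:ℕ):ℝ) = ((round ((a:ℝ)*x) : ℤ) : ℝ) := by
    rw [hkdef]; exact_mod_cast congrArg (Int.cast : ℤ → ℝ) (Int.toNat_of_nonneg hr0)
  have hka : k ≤ a := by rw [hkdef]; exact Int.toNat_le.2 hra
  have hdx : |x - (k:ℝ)/a| < auxW a δ j / 2 := by
    have h1 : |(a:ℝ)*x - (k:ℝ)| < min ((2:ℝ)^(j+1)*δ^2) 1 := by
      rw [hkr]
      exact lt_min hj (lt_of_le_of_lt haxh one_half_lt_one)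
    have h2 : x - (k:ℝ)/a = ((a:ℝ)*x - k)/a := by field_simp
    rw [h2, abs_div, abs_of_pos ha0]
    unfold auxW
    rw [div_div]
    rw [div_lt_div_iff₀ ha0 (by positivity)]
    calc |(a:ℝ)*x - (k:ℝ)| * (a*2) < min ((2:ℝ)^(j+1)*δ^2) 1 * (a*2) := by
          apply mul_lt_mul_of_pos_right h1 (by positivity)
      _ = 2 * min ((2:ℝ)^(j+1)*δ^2) 1 * a := by ring
  -- the integer l
  have hbynn : 0 ≤ (b:ℝ)*y := mul_nonneg hb0.le hy.1
  have hs0 : 0 ≤ round ((b:ℝ)*y) := by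
    rw [round_eq]; exact Int.floor_nonneg.2 (by linarith)
  have hsb : round ((b:ℝ)*y) ≤ (b:ℤ) := by
    rw [round_eq]
    have h1 : (b:ℝ)*y + 1/2 ≤ (b:ℝ) + 1/2 := by nlinarith [hy.2]
    calc ⌊(b:ℝ)*y + 1/2⌋ ≤ ⌊(b:ℝ) + 1/2⌋ := Int.floor_le_floor h1
      _ = b := Int.floor_eq_iff.2 ⟨by push_cast; linarith, by push_cast; linarith⟩
  set l := (round ((b:ℝ)*y)).toNat with hldef
  have hlr : ((l:ℕ):ℝ) = ((round ((b:ℝ)*y) : ℤ) : ℝ) := by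
    rw [hldef]; exact_mod_cast congrArg (Int.cast : ℤ → ℝ) (Int.toNat_of_nonneg hs0)
  have hlb : l ≤ b := by rw [hldef]; exact Int.toNat_le.2 hsb
  have hdy : |y - (l:ℝ)/b| < auxV b j / 2 := by
    have hp : (0:ℝ) < 2^j := by positivity
    have h1 : |(b:ℝ)*y - (l:ℝ)| < 1/2^j := by
      rw [hlr]
      show nint ((b:ℝ)*y) < 1/2^j
      rw [lt_div_iff₀ hp]; exact hby2
    have h2 : y - (l:ℝ)/b = ((b:ℝ)*y - l)/b := by field_simp
    rw [h2, abs_div, abs_of_pos hb0]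
    unfold auxV
    rw [div_div, div_lt_div_iff₀ hb0 (by positivity)]
    calc |(b:ℝ)*y - (l:ℝ)| * (b*2^j*2) < 1/2^j * (b*2^j*2) := by
          apply mul_lt_mul_of_pos_right h1 (by positivity)
      _ = 2*b := by field_simp
  -- choose m, n
  have hc0 : 0 < auxC a b δ j := auxC_pos ha hb hδ0 j
  have hcw : auxC a b δ j ≤ auxW a δ j := min_le_left _ _
  have hcv : auxC a b δ j ≤ auxV b j := min_le_right _ _
  have habs := abs_lt.1 hdx
  have habs' := abs_lt.1 hdy
  obtain ⟨m, hm1, hmem⟩ := mem_Icc_floor hc0 (show (k:ℝ)/a - auxW a δ j/2 < x by linarith [habs.1])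
  obtain ⟨n, hn1, hnem⟩ := mem_Icc_floor hc0 (show (l:ℝ)/b - auxV b j/2 < y by linarith [habs'.1])
  have hmw : (m:ℝ) * auxC a b δ j ≤ auxW a δ j := le_trans hm1 (by linarith [habs.2])
  have hnv : (n:ℝ) * auxC a b δ j ≤ auxV b j := le_trans hn1 (by linarith [habs'.2])
  refine Set.mem_iUnion.2 ⟨(j,k,l,m,n), ?_⟩
  simp only [auxSQ]
  rw [if_pos ⟨hka, hlb, hmw, hnv⟩]
  exact Set.mem_prod.2 ⟨hmem, hnem⟩

lemma auxC_le_W (a b : ℕ) (δ : ℝ) (j : ℕ) : auxC a b δ j ≤ auxW a δ j := min_le_left _ _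
lemma auxC_le_V (a b : ℕ) (δ : ℝ) (j : ℕ) : auxC a b δ j ≤ auxV b j := min_le_right _ _

set_option maxHeartbeats 2000000 in
theorem stmt6 (s : ℝ) (hs : s ∈ Ioo (0 : ℝ) 1) :
    ∃ C₁ : ℝ, 0 < C₁ ∧ ∀ (a b : ℕ), 0 < a → 0 < b → ∀ δ : ℝ, δ ∈ Ioo (0 : ℝ) 1 →
      hContent2 (1 + s) {p : ℝ × ℝ | p.1 ∈ Icc (0 : ℝ) 1 ∧ p.2 ∈ Icc (0 : ℝ) 1 ∧
          nint ((a : ℝ) * p.1) * nint ((b : ℝ) * p.2) < δ ^ 2} ≤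
        ENNReal.ofReal (C₁ * ((a : ℝ) * (δ ^ 2 / a) ^ s + (b : ℝ) * (δ ^ 2 / b) ^ s)) := by
  obtain ⟨hs0, hs1⟩ := hs
  -- constants
  set q : ℝ := ((2:ℝ)⁻¹)^s with hq_def
  have hq0 : 0 < q := Real.rpow_pos_of_pos (by norm_num) s
  have hq1 : q < 1 := Real.rpow_lt_one (by norm_num) (by norm_num) hs0
  have hqh : 1/2 < q := by
    have h := Real.rpow_lt_rpow_of_exponent_gt (x := (2:ℝ)⁻¹) (by norm_num) (by norm_num) hs1
    rw [Real.rpow_one] at h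
    rw [hq_def]; linarith
  set r2 : ℝ := (2:ℝ)^s/2 with hr2_def
  have hr20 : 0 < r2 := by
    have := Real.rpow_pos_of_pos (x := (2:ℝ)) (by norm_num) s
    rw [hr2_def]; positivity
  have hr21 : r2 < 1 := by
    have h := Real.rpow_lt_rpow_of_exponent_lt (x := (2:ℝ)) one_lt_two hs1
    rw [Real.rpow_one] at h
    rw [hr2_def]; linarith
  set ρ : ℝ := 2*q with hρ_def
  have hρ1 : 1 < ρ := by rw [hρ_def]; linarith
  have h1r2 : 0 < 1 - r2 := by linarith
  have h1q : 0 < 1 - q := by linarith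
  have hρ0 : 0 < ρ - 1 := by linarith
  set c1 : ℝ := 128/(1-r2) with hc1
  set c2 : ℝ := 256/(ρ-1) with hc2
  set c3 : ℝ := 64/(1-q) with hc3
  have hc1p : 0 < c1 := by rw [hc1]; positivity
  have hc2p : 0 < c2 := by rw [hc2]; positivity
  have hc3p : 0 < c3 := by rw [hc3]; positivity
  refine ⟨c1 + c2 + c3, by positivity, ?_⟩
  intro a b ha hb δ hδ
  obtain ⟨hδ0, hδ1⟩ := hδ
  have haR : (0:ℝ) < a := by exact_mod_cast ha
  have hbR : (0:ℝ) < b := by exact_mod_cast hb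
  have hd0 : (0:ℝ) < δ^2 := by positivity
  have hd1 : δ^2 < 1 := by nlinarith
  set aT : ℝ := (a:ℝ)*(δ^2/(a:ℝ))^s with haT
  set bT : ℝ := (b:ℝ)*(δ^2/(b:ℝ))^s with hbT
  have haT0 : 0 ≤ aT := by rw [haT]; positivity
  have hbT0 : 0 ≤ bT := by rw [hbT]; positivity
  -- the cover
  have hcover : ∀ e : ℕ ≃ (ℕ×ℕ×ℕ×ℕ×ℕ), {p : ℝ × ℝ | p.1 ∈ Icc (0 : ℝ) 1 ∧ p.2 ∈ Icc (0 : ℝ) 1 ∧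
      nint ((a : ℝ) * p.1) * nint ((b : ℝ) * p.2) < δ ^ 2} ⊆ ⋃ i, auxSQ a b δ (e i) := by
    intro e
    have h1 : ⋃ i, auxSQ a b δ (e i) = ⋃ x, auxSQ a b δ x :=
      Function.Surjective.iUnion_comp e.surjective _
    rw [h1]
    exact aux_cover a b ha hb hδ0 hδ1
  obtain ⟨e⟩ : Nonempty (ℕ ≃ (ℕ×ℕ×ℕ×ℕ×ℕ)) := ⟨(Denumerable.eqv (ℕ×ℕ×ℕ×ℕ×ℕ)).symm⟩
  have hstart : hContent2 (1 + s) {p : ℝ × ℝ | p.1 ∈ Icc (0 : ℝ) 1 ∧ p.2 ∈ Icc (0 : ℝ) 1 ∧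
      nint ((a : ℝ) * p.1) * nint ((b : ℝ) * p.2) < δ ^ 2}
      ≤ ∑' (i:ℕ), EMetric.diam (auxSQ a b δ (e i)) ^ (1+s) :=
    iInf₂_le (fun i => auxSQ a b δ (e i)) (hcover e)
  have hEq : (∑' (i:ℕ), EMetric.diam (auxSQ a b δ (e i)) ^ (1+s))
      = ∑' x : ℕ×ℕ×ℕ×ℕ×ℕ, EMetric.diam (auxSQ a b δ x) ^ (1+s) :=
    Equiv.tsum_eq e (fun x => EMetric.diam (auxSQ a b δ x) ^ (1+s))
  have hIter : (∑' x : ℕ×ℕ×ℕ×ℕ×ℕ, EMetric.diam (auxSQ a b δ x) ^ (1+s))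
      = ∑' (j:ℕ) (k:ℕ) (l:ℕ) (m:ℕ) (n:ℕ), EMetric.diam (auxSQ a b δ (j,k,l,m,n)) ^ (1+s) := by
    rw [ENNReal.tsum_prod']
    refine tsum_congr (fun j => ?_)
    rw [ENNReal.tsum_prod']
    refine tsum_congr (fun k => ?_)
    rw [ENNReal.tsum_prod']
    refine tsum_congr (fun l => ?_)
    rw [ENNReal.tsum_prod']
  -- per-j bound
  have hc0 : ∀ j, 0 < auxC a b δ j := auxC_pos ha hb hδ0
  have hcw : ∀ j, auxC a b δ j ≤ auxW a δ j := auxC_le_W a b δ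
  have hcv : ∀ j, auxC a b δ j ≤ auxV b j := auxC_le_V a b δ
  have hW0 : ∀ j, 0 < auxW a δ j := auxW_pos ha hδ0
  have hV0 : ∀ j, 0 < auxV b j := auxV_pos hb
  have hjb : ∀ j : ℕ, (∑' (k:ℕ) (l:ℕ) (m:ℕ) (n:ℕ),
        EMetric.diam (auxSQ a b δ (j,k,l,m,n)) ^ (1+s))
      ≤ ENNReal.ofReal (16*(a:ℝ)*b*(auxW a δ j * auxV b j^s))
        + ENNReal.ofReal (16*(a:ℝ)*b*(auxV b j * auxW a δ j^s)) := by
    intro j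
    have hcp : (0:ℝ) ≤ (auxC a b δ j)^(1+s) := Real.rpow_nonneg (hc0 j).le _
    calc (∑' (k:ℕ) (l:ℕ) (m:ℕ) (n:ℕ), EMetric.diam (auxSQ a b δ (j,k,l,m,n)) ^ (1+s))
        ≤ ((a+1:ℕ):ℝ≥0∞) * (((b+1:ℕ):ℝ≥0∞) * (((⌊auxW a δ j / auxC a b δ j⌋₊+1 : ℕ):ℝ≥0∞) *
          (((⌊auxV b j / auxC a b δ j⌋₊+1 : ℕ):ℝ≥0∞) * ENNReal.ofReal ((auxC a b δ j)^(1+s))))) :=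
          aux_sum_j a b hs0 hc0 hcw hcv j
      _ = ENNReal.ofReal (((a+1:ℕ):ℝ) * (((b+1:ℕ):ℝ) * (((⌊auxW a δ j / auxC a b δ j⌋₊+1 : ℕ):ℝ) *
          (((⌊auxV b j / auxC a b δ j⌋₊+1 : ℕ):ℝ) * ((auxC a b δ j)^(1+s)))))) := by
          rw [ENNReal.ofReal_mul (by positivity), ENNReal.ofReal_mul (by positivity),
            ENNReal.ofReal_mul (by positivity), ENNReal.ofReal_mul (by positivity),
            ENNReal.ofReal_natCast, ENNReal.ofReal_natCast, ENNReal.ofReal_natCast,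
            ENNReal.ofReal_natCast]
      _ ≤ ENNReal.ofReal (16*(a:ℝ)*b*(auxW a δ j * auxV b j^s + auxV b j * auxW a δ j^s)) := by
          apply ENNReal.ofReal_le_ofReal
          push_cast
          exact aux_real_j a b ha hb hδ0 hs0 j
      _ = ENNReal.ofReal (16*(a:ℝ)*b*(auxW a δ j * auxV b j^s)
            + 16*(a:ℝ)*b*(auxV b j * auxW a δ j^s)) := by ring_nf
      _ = _ := ENNReal.ofReal_add
          (mul_nonneg (by positivity) (mul_nonneg (hW0 j).le (Real.rpow_nonneg (hV0 j).le s)))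
          (mul_nonneg (by positivity) (mul_nonneg (hV0 j).le (Real.rpow_nonneg (hW0 j).le s)))
  -- choose J
  have hexJ : ∃ n : ℕ, (1:ℝ) < 2^(n+1)*δ^2 := by
    obtain ⟨n, hn⟩ := pow_unbounded_of_one_lt (1/δ^2) (one_lt_two (α := ℝ))
    refine ⟨n, ?_⟩
    rw [div_lt_iff₀ hd0] at hn
    have h2 : (2:ℝ)^(n+1) = 2*2^n := by ring
    nlinarith [pow_pos (zero_lt_two (α := ℝ)) n]
  set J := Nat.find hexJ with hJdef
  have hJ1 : (1:ℝ) < 2^(J+1)*δ^2 := Nat.find_spec hexJ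
  have hJ2 : (2:ℝ)^J*δ^2 ≤ 1 := by
    rcases Nat.eq_zero_or_pos J with h0 | hpos
    · rw [h0, pow_zero]; linarith
    · have hmin : ¬ ((1:ℝ) < 2^((J-1)+1)*δ^2) := Nat.find_min hexJ (by omega)
      rw [Nat.sub_add_cancel hpos] at hmin
      push_neg at hmin
      exact hmin
  set E : ℝ := (2:ℝ)^(J+1) with hE_def
  have hE0 : (0:ℝ) < E := by rw [hE_def]; positivity
  have hEδ : E*δ^2 ≤ 2 := by
    have h2 : E = 2*2^J := by rw [hE_def]; ring
    nlinarith
  have hEinv : E⁻¹ ≤ δ^2 := by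
    rw [inv_le_iff_one_le_mul₀ hE0]
    nlinarith
  have hqJ : q^(J+1) ≤ (δ^2)^s := by
    have h1 : q^(J+1) = ((2:ℝ)⁻¹^(J+1))^s := (rpow_pow_comm 2⁻¹ (by norm_num) (J+1) s).symm
    have h2 : ((2:ℝ)⁻¹)^(J+1) = E⁻¹ := by rw [hE_def, inv_pow]
    rw [h1, h2]
    exact Real.rpow_le_rpow (by positivity) hEinv hs0.le
  have hb2s : (b:ℝ)*(2/(b:ℝ))^s*(δ^2)^s ≤ 2*bT := by
    have h1 : (2/(b:ℝ))^s*(δ^2)^s = ((2/(b:ℝ))*δ^2)^s :=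
      (Real.mul_rpow (by positivity) (by positivity)).symm
    have h2 : ((2:ℝ)/(b:ℝ))*δ^2 = 2*(δ^2/(b:ℝ)) := by ring
    have h3 : ((2:ℝ)*(δ^2/(b:ℝ)))^s = 2^s*(δ^2/(b:ℝ))^s :=
      Real.mul_rpow (by norm_num) (by positivity)
    have h4 : (2:ℝ)^s ≤ 2 := by
      have h := Real.rpow_le_rpow_of_exponent_le (x := (2:ℝ)) (by norm_num) hs1.le
      rw [Real.rpow_one] at h; exact h
    have h5 : (0:ℝ) ≤ (δ^2/(b:ℝ))^s := Real.rpow_nonneg (by positivity) _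
    calc (b:ℝ)*(2/(b:ℝ))^s*(δ^2)^s = (b:ℝ)*(((2/(b:ℝ))*δ^2)^s) := by rw [← h1]; ring
      _ = (b:ℝ)*(2^s*(δ^2/(b:ℝ))^s) := by rw [h2, h3]
      _ ≤ (b:ℝ)*(2*(δ^2/(b:ℝ))^s) := by
          apply mul_le_mul_of_nonneg_left _ hbR.le
          exact mul_le_mul_of_nonneg_right h4 h5
      _ = 2*bT := by rw [hbT]; ring
  -- T2 sum
  have hsum2 : (∑' j, ENNReal.ofReal (16*(a:ℝ)*b*(auxV b j * auxW a δ j^s)))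
      ≤ ENNReal.ofReal (c1*aT) := by
    calc (∑' j, ENNReal.ofReal (16*(a:ℝ)*b*(auxV b j * auxW a δ j^s)))
        ≤ ∑' j, ENNReal.ofReal ((128*aT) * r2^j) := by
          apply ENNReal.tsum_le_tsum
          intro j
          apply ENNReal.ofReal_le_ofReal
          have h := bound_T2 hs0 hs1 a b ha hb hδ0 j
          calc 16*(a:ℝ)*b*(auxV b j * auxW a δ j^s)
              ≤ 128 * ((a:ℝ)*(δ^2/a)^s) * ((2:ℝ)^s/2)^j := h
            _ = (128*aT) * r2^j := by rw [haT, hr2_def]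
      _ ≤ ENNReal.ofReal ((128*aT)/(1-r2)) := tsum_geo_ofReal hr20.le hr21 _ (by positivity)
      _ = ENNReal.ofReal (c1*aT) := by rw [hc1]; ring_nf
  -- T1 head
  have hhead : (∑ j ∈ Finset.range (J+1),
        ENNReal.ofReal (16*(a:ℝ)*b*(auxW a δ j * auxV b j^s)))
      ≤ ENNReal.ofReal (c2*bT) := by
    rw [← ENNReal.ofReal_sum_of_nonneg (fun j _ => mul_nonneg (by positivity)
      (mul_nonneg (hW0 j).le (Real.rpow_nonneg (hV0 j).le s)))]
    apply ENNReal.ofReal_le_ofReal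
    set KH : ℝ := 64*((b:ℝ)*(2/(b:ℝ))^s)*δ^2 with hKH
    have hKH0 : 0 ≤ KH := by rw [hKH]; positivity
    have hρpos : (0:ℝ) < ρ := by linarith
    calc (∑ j ∈ Finset.range (J+1), 16*(a:ℝ)*b*(auxW a δ j * auxV b j^s))
        ≤ ∑ j ∈ Finset.range (J+1), KH*ρ^j := by
          apply Finset.sum_le_sum
          intro j _
          have h := bound_T1 hs0 a b ha hb hδ0 j
          calc 16*(a:ℝ)*b*(auxW a δ j * auxV b j^s)
              ≤ 64*((b:ℝ)*(2/(b:ℝ))^s)*δ^2*(2*((2:ℝ)⁻¹)^s)^j := h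
            _ = KH*ρ^j := by rw [hKH, hρ_def, hq_def]
      _ = KH * ∑ j ∈ Finset.range (J+1), ρ^j := by rw [Finset.mul_sum]
      _ = KH * ((ρ^(J+1)-1)/(ρ-1)) := by rw [geom_sum_eq (by linarith) (J+1)]
      _ ≤ KH * (ρ^(J+1)/(ρ-1)) := by
          apply mul_le_mul_of_nonneg_left _ hKH0
          gcongr <;> linarith
      _ ≤ c2*bT := by
          have hqpow : (0:ℝ) ≤ q^(J+1) := by positivity
          have hρJ : δ^2*ρ^(J+1) ≤ 2*(δ^2)^s := by
            have h1 : ρ^(J+1) = 2^(J+1)*q^(J+1) := by rw [hρ_def, mul_pow]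
            have h2 : δ^2*ρ^(J+1) = (E*δ^2)*q^(J+1) := by rw [h1, hE_def]; ring
            calc δ^2*ρ^(J+1) = (E*δ^2)*q^(J+1) := h2
              _ ≤ 2*q^(J+1) := mul_le_mul_of_nonneg_right hEδ hqpow
              _ ≤ 2*(δ^2)^s := by linarith [hqJ]
          have hkey : KH*ρ^(J+1) ≤ 256*bT := by
            have hnn : (0:ℝ) ≤ 64*((b:ℝ)*(2/(b:ℝ))^s) := by positivity
            calc KH*ρ^(J+1) = 64*((b:ℝ)*(2/(b:ℝ))^s)*(δ^2*ρ^(J+1)) := by rw [hKH]; ring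
              _ ≤ 64*((b:ℝ)*(2/(b:ℝ))^s)*(2*(δ^2)^s) := mul_le_mul_of_nonneg_left hρJ hnn
              _ = 128*((b:ℝ)*(2/(b:ℝ))^s*(δ^2)^s) := by ring
              _ ≤ 128*(2*bT) := by linarith [hb2s]
              _ = 256*bT := by ring
          calc KH * (ρ^(J+1)/(ρ-1)) = (KH*ρ^(J+1))/(ρ-1) := by ring
            _ ≤ (256*bT)/(ρ-1) := by gcongr
            _ = c2*bT := by rw [hc2]; ring
  -- T1 tail
  have htail : (∑' i, ENNReal.ofReal (16*(a:ℝ)*b*(auxW a δ (i+(J+1)) * auxV b (i+(J+1))^s)))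
      ≤ ENNReal.ofReal (c3*bT) := by
    calc (∑' i, ENNReal.ofReal (16*(a:ℝ)*b*(auxW a δ (i+(J+1)) * auxV b (i+(J+1))^s)))
        ≤ ∑' i, ENNReal.ofReal ((64*bT)*q^i) := by
          apply ENNReal.tsum_le_tsum
          intro i
          apply ENNReal.ofReal_le_ofReal
          have h := bound_T1' hs0 a b ha hb hδ0 (i+(J+1))
          have hq' : (((2:ℝ)⁻¹)^s)^(i+(J+1)) = q^(J+1)*q^i := by
            rw [← hq_def, pow_add]; ring
          have h0 : (0:ℝ) ≤ q^i := by positivity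
          have h1 : (0:ℝ) ≤ 32*((b:ℝ)*(2/(b:ℝ))^s) := by positivity
          calc 16*(a:ℝ)*b*(auxW a δ (i+(J+1)) * auxV b (i+(J+1))^s)
              ≤ 32*((b:ℝ)*(2/(b:ℝ))^s)*(((2:ℝ)⁻¹)^s)^(i+(J+1)) := h
            _ = 32*((b:ℝ)*(2/(b:ℝ))^s)*q^(J+1)*q^i := by rw [hq']; ring
            _ ≤ 32*((b:ℝ)*(2/(b:ℝ))^s)*(δ^2)^s*q^i := by
                apply mul_le_mul_of_nonneg_right _ h0
                exact mul_le_mul_of_nonneg_left hqJ h1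
            _ ≤ (64*bT)*q^i := by
                apply mul_le_mul_of_nonneg_right _ h0
                nlinarith [hb2s]
      _ ≤ ENNReal.ofReal ((64*bT)/(1-q)) := tsum_geo_ofReal hq0.le hq1 _ (by positivity)
      _ = ENNReal.ofReal (c3*bT) := by rw [hc3]; ring_nf
  have hsum1 : (∑' j, ENNReal.ofReal (16*(a:ℝ)*b*(auxW a δ j * auxV b j^s)))
      ≤ ENNReal.ofReal (c2*bT) + ENNReal.ofReal (c3*bT) :=
    le_trans (ennreal_tsum_split _ (J+1)) (add_le_add hhead htail)
  -- final assembly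
  calc hContent2 (1 + s) {p : ℝ × ℝ | p.1 ∈ Icc (0 : ℝ) 1 ∧ p.2 ∈ Icc (0 : ℝ) 1 ∧
        nint ((a : ℝ) * p.1) * nint ((b : ℝ) * p.2) < δ ^ 2}
      ≤ ∑' (i:ℕ), EMetric.diam (auxSQ a b δ (e i)) ^ (1+s) := hstart
    _ = ∑' x : ℕ×ℕ×ℕ×ℕ×ℕ, EMetric.diam (auxSQ a b δ x) ^ (1+s) := hEq
    _ = ∑' (j:ℕ) (k:ℕ) (l:ℕ) (m:ℕ) (n:ℕ),
          EMetric.diam (auxSQ a b δ (j,k,l,m,n)) ^ (1+s) := hIter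
    _ ≤ ∑' (j:ℕ), (ENNReal.ofReal (16*(a:ℝ)*b*(auxW a δ j * auxV b j^s))
          + ENNReal.ofReal (16*(a:ℝ)*b*(auxV b j * auxW a δ j^s))) :=
        ENNReal.tsum_le_tsum hjb
    _ = (∑' (j:ℕ), ENNReal.ofReal (16*(a:ℝ)*b*(auxW a δ j * auxV b j^s)))
          + ∑' (j:ℕ), ENNReal.ofReal (16*(a:ℝ)*b*(auxV b j * auxW a δ j^s)) :=
        ENNReal.tsum_add
    _ ≤ (ENNReal.ofReal (c2*bT) + ENNReal.ofReal (c3*bT)) + ENNReal.ofReal (c1*aT) :=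
        add_le_add hsum1 hsum2
    _ = ENNReal.ofReal (c2*bT + c3*bT + c1*aT) := by
        rw [← ENNReal.ofReal_add (by positivity) (by positivity),
          ← ENNReal.ofReal_add (by positivity) (by positivity)]
    _ ≤ ENNReal.ofReal ((c1 + c2 + c3) * (aT + bT)) := by
        apply ENNReal.ofReal_le_ofReal
        nlinarith [mul_nonneg hc1p.le hbT0, mul_nonneg hc2p.le haT0, mul_nonneg hc3p.le haT0]
end

section
/- Let a, b be positive integers and ρ, η ∈ (0,1). Then the set F_{a,b}(ρ,η) = { x ∈ [0,1] : ‖ax‖ < ρ and ‖bx‖ < η } can be covered by at most 12·[ gcd(a,b) + 2ab·max{ρ/a, η/b} ] intervals each of length 2·min{ρ/a, η/b}. -/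
open MeasureTheory Filter Set

lemma nint_le (t : ℝ) (m : ℤ) : nint t ≤ |t - (m : ℝ)| := by
  rw [nint, abs_sub_round_eq_min]
  rcases le_or_gt m ⌊t⌋ with h | h
  · refine (min_le_left _ _).trans ?_
    have h1 : (m : ℝ) ≤ ⌊t⌋ := by exact_mod_cast h
    have h2 : Int.fract t ≤ t - m := by
      rw [← Int.self_sub_floor]; linarith
    exact h2.trans (le_abs_self _)
  · refine (min_le_right _ _).trans ?_
    have h1 : (⌊t⌋ : ℝ) + 1 ≤ m := by exact_mod_cast h
    have h2 : 1 - Int.fract t ≤ (m : ℝ) - t := by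
      rw [← Int.self_sub_floor]; linarith
    calc 1 - Int.fract t ≤ (m:ℝ) - t := h2
      _ ≤ |(m:ℝ) - t| := le_abs_self _
      _ = |t - m| := abs_sub_comm _ _

set_option maxHeartbeats 1600000 in
lemma cover_aux (a b : ℕ) (ha : 0 < a) (hb : 0 < b) (ρ η : ℝ)
    (hρ : ρ ∈ Set.Ioo (0 : ℝ) 1) (hη : η ∈ Set.Ioo (0 : ℝ) 1) (hle : ρ / a ≤ η / b) :
    ∃ (k : ℕ) (c : Fin k → ℝ),
      (k : ℝ) ≤ 12 * ((Nat.gcd a b : ℝ) + 2 * a * η) ∧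
      {x : ℝ | x ∈ Set.Icc (0 : ℝ) 1 ∧ nint ((a : ℝ) * x) < ρ ∧ nint ((b : ℝ) * x) < η} ⊆
        ⋃ i, Set.Icc (c i) (c i + 2 * (ρ / a)) := by
  classical
  obtain ⟨hρ0, hρ1⟩ := hρ
  obtain ⟨hη0, hη1⟩ := hη
  have ha' : (0:ℝ) < a := by exact_mod_cast ha
  have hb' : (0:ℝ) < b := by exact_mod_cast hb
  set g := Nat.gcd a b with hgdef
  have hg : 0 < g := Nat.gcd_pos_of_pos_left _ ha
  have hg' : (0:ℝ) < g := by exact_mod_cast hg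
  set F := {x : ℝ | x ∈ Set.Icc (0 : ℝ) 1 ∧ nint ((a : ℝ) * x) < ρ ∧ nint ((b : ℝ) * x) < η}
    with hF
  set S := (Finset.range (a+1)).filter (fun k : ℕ => ∃ x ∈ F, |(a:ℝ)*x - (k:ℝ)| < ρ) with hSdef
  refine ⟨S.card, fun i => ((S.equivFin.symm i : ℕ) : ℝ)/a - ρ/a, ?_, ?_⟩
  · -- cardinality bound
    set a' := a / g with ha'def
    set b' := b / g with hb'def
    have haa : g * a' = a := Nat.mul_div_cancel' (Nat.gcd_dvd_left a b)
    have hbb : g * b' = b := Nat.mul_div_cancel' (Nat.gcd_dvd_right a b)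
    have ha'pos : 0 < a' := by
      rcases Nat.eq_zero_or_pos a' with h | h
      · rw [h, Nat.mul_zero] at haa; omega
      · exact h
    have hgne : ((g:ℤ)) ≠ 0 := by exact_mod_cast hg.ne'
    have coprime : Nat.Coprime a' b' := Nat.coprime_div_gcd_div_gcd hg
    have hρb : ρ * b ≤ η * a := (div_le_div_iff₀ ha' hb').mp hle
    set N : ℤ := ⌊2*η*a/g⌋ with hNdef
    have hN0 : (0:ℤ) ≤ N := Int.floor_nonneg.mpr (by positivity)
    set T : Finset (ℤ × ℕ) := Finset.Icc (-N) N ×ˢ Finset.range (g+1) with hT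
    set f : ℕ → ℤ × ℕ := fun k =>
      (((b:ℤ)*(k:ℤ) - (a:ℤ) * round (((b:ℝ)*(k:ℝ))/(a:ℝ))) / (g:ℤ), k / a') with hf
    have hgdvd : ∀ k : ℕ, (g:ℤ) ∣ (b:ℤ)*(k:ℤ) - (a:ℤ) * round (((b:ℝ)*(k:ℝ))/(a:ℝ)) := by
      intro k
      apply dvd_sub
      · exact Dvd.dvd.mul_right (by exact_mod_cast Nat.gcd_dvd_right a b) _
      · exact Dvd.dvd.mul_right (by exact_mod_cast Nat.gcd_dvd_left a b) _
    have hmap : ∀ k ∈ S, f k ∈ T := by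
      intro k hk
      obtain ⟨hkr, x, hxF, hxk⟩ := Finset.mem_filter.mp hk
      have hkle : k ≤ a := by have := Finset.mem_range.mp hkr; omega
      set m : ℤ := round (((b:ℝ)*(k:ℝ))/(a:ℝ)) with hm
      set n : ℤ := (b:ℤ)*(k:ℤ) - (a:ℤ)*m with hn
      have hgn : (g:ℤ) ∣ n := hgdvd k
      obtain ⟨⟨hx0, hx1⟩, hax, hbx⟩ := hxF
      have h2 : |((b:ℝ)*(k:ℝ))/a - (b:ℝ)*x| < η := by
        have he : ((b:ℝ)*(k:ℝ))/a - (b:ℝ)*x = ((b:ℝ)/a)*((k:ℝ) - (a:ℝ)*x) := by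
          field_simp
        rw [he, abs_mul, abs_of_pos (div_pos hb' ha'), abs_sub_comm]
        calc ((b:ℝ)/a)*|(a:ℝ)*x - (k:ℝ)| < ((b:ℝ)/a)*ρ :=
              mul_lt_mul_of_pos_left hxk (div_pos hb' ha')
          _ ≤ η := by rw [div_mul_eq_mul_div, div_le_iff₀ ha']; nlinarith
      have h3 : |((b:ℝ)*(k:ℝ))/a - (m:ℝ)| < 2*η := by
        have h5 : |((b:ℝ)*(k:ℝ))/a - (round ((b:ℝ)*x) : ℝ)| < 2*η := by
          calc |((b:ℝ)*(k:ℝ))/a - (round ((b:ℝ)*x):ℝ)|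
              ≤ |((b:ℝ)*(k:ℝ))/a - (b:ℝ)*x| + |(b:ℝ)*x - (round ((b:ℝ)*x):ℝ)| :=
                abs_sub_le _ _ _
            _ < η + η := add_lt_add h2 hbx
            _ = 2*η := by ring
        calc |((b:ℝ)*(k:ℝ))/a - (m:ℝ)| = nint (((b:ℝ)*(k:ℝ))/a) := by rw [nint, hm]
          _ ≤ |((b:ℝ)*(k:ℝ))/a - (round ((b:ℝ)*x) : ℝ)| := nint_le _ _
          _ < 2*η := h5
      have h6 : |(n:ℝ)| < 2*η*a := by
        have he : (n:ℝ) = (a:ℝ)*(((b:ℝ)*(k:ℝ))/a - (m:ℝ)) := by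
          rw [hn]; push_cast; field_simp
        rw [he, abs_mul, abs_of_pos ha']
        calc (a:ℝ)*|((b:ℝ)*(k:ℝ))/a - (m:ℝ)| < (a:ℝ)*(2*η) :=
              mul_lt_mul_of_pos_left h3 ha'
          _ = 2*η*a := by ring
      have h7 : ((n/(g:ℤ) : ℤ):ℝ) = (n:ℝ)/(g:ℝ) := by
        obtain ⟨c, hc⟩ := hgn
        rw [hc, Int.mul_ediv_cancel_left _ hgne]
        push_cast
        field_simp
      refine Finset.mem_product.mpr ⟨?_, ?_⟩
      · show n / (g:ℤ) ∈ Finset.Icc (-N) N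
        rw [Finset.mem_Icc]
        constructor
        · have hlo : -(n/(g:ℤ)) ≤ N := by
            rw [hNdef]
            apply Int.le_floor.mpr
            push_cast
            rw [h7, ← neg_div]
            gcongr
            linarith [neg_abs_le (n:ℝ)]
          omega
        · rw [hNdef]
          apply Int.le_floor.mpr
          rw [h7]
          gcongr
          linarith [le_abs_self (n:ℝ)]
      · show k / a' ∈ Finset.range (g+1)
        rw [Finset.mem_range]
        have hag : a / a' = g := by rw [← haa, Nat.mul_div_cancel _ ha'pos]
        have : k / a' ≤ a / a' := Nat.div_le_div_right hkle
        omega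
    have hinj : Set.InjOn f (S : Set ℕ) := by
      intro k₁ _ k₂ _ hfeq
      simp only [hf, Prod.mk.injEq] at hfeq
      obtain ⟨h1, h2⟩ := hfeq
      set m₁ := round (((b:ℝ)*(k₁:ℝ))/(a:ℝ)) with hm₁
      set m₂ := round (((b:ℝ)*(k₂:ℝ))/(a:ℝ)) with hm₂
      have hn : (b:ℤ)*(k₁:ℤ) - (a:ℤ)*m₁ = (b:ℤ)*(k₂:ℤ) - (a:ℤ)*m₂ := by
        obtain ⟨c₁, hc₁⟩ := hgdvd k₁
        obtain ⟨c₂, hc₂⟩ := hgdvd k₂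
        rw [← hm₁] at hc₁
        rw [← hm₂] at hc₂
        rw [hc₁, hc₂] at h1 ⊢
        rw [Int.mul_ediv_cancel_left _ hgne, Int.mul_ediv_cancel_left _ hgne] at h1
        rw [h1]
      have hdvd : (a':ℤ) ∣ (b':ℤ) * ((k₁:ℤ) - (k₂:ℤ)) := by
        refine ⟨m₁ - m₂, ?_⟩
        have hga : (g:ℤ)*(a':ℤ) = (a:ℤ) := by exact_mod_cast haa
        have hgb : (g:ℤ)*(b':ℤ) = (b:ℤ) := by exact_mod_cast hbb
        apply mul_left_cancel₀ hgne
        rw [← mul_assoc, ← mul_assoc, hga, hgb]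
        ring_nf
        ring_nf at hn
        linarith [hn]
      have hcop : IsCoprime (a':ℤ) (b':ℤ) := Nat.isCoprime_iff_coprime.mpr coprime
      obtain ⟨c, hc⟩ := hcop.dvd_of_dvd_mul_left hdvd
      have e1 := Nat.div_add_mod k₁ a'
      have e2 := Nat.div_add_mod k₂ a'
      have hz : ((k₁ % a' : ℕ):ℤ) - ((k₂ % a' : ℕ):ℤ) = (a':ℤ) * c := by
        have e1' : (a':ℤ) * ((k₁/a' : ℕ):ℤ) + ((k₁%a' :ℕ):ℤ) = (k₁:ℤ) := by
          exact_mod_cast e1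
        have e2' : (a':ℤ) * ((k₂/a' : ℕ):ℤ) + ((k₂%a' :ℕ):ℤ) = (k₂:ℤ) := by
          exact_mod_cast e2
        rw [h2] at e1'
        linarith [hc]
      have hr1 : ((k₁ % a' : ℕ):ℤ) < (a':ℤ) := by exact_mod_cast Nat.mod_lt _ ha'pos
      have hr2 : ((k₂ % a' : ℕ):ℤ) < (a':ℤ) := by exact_mod_cast Nat.mod_lt _ ha'pos
      have hr1' : (0:ℤ) ≤ ((k₁ % a' : ℕ):ℤ) := by positivity
      have hr2' : (0:ℤ) ≤ ((k₂ % a' : ℕ):ℤ) := by positivity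
      have ha'z : (0:ℤ) < (a':ℤ) := by exact_mod_cast ha'pos
      have hc0 : c = 0 := by
        rcases lt_trichotomy c 0 with h | h | h
        · exfalso
          have : (a':ℤ)*c ≤ (a':ℤ)*(-1) :=
            mul_le_mul_of_nonneg_left (by omega) ha'z.le
          linarith
        · exact h
        · exfalso
          have : (a':ℤ)*1 ≤ (a':ℤ)*c :=
            mul_le_mul_of_nonneg_left (by omega) ha'z.le
          linarith
      rw [hc0, mul_zero] at hc
      have : (k₁:ℤ) = (k₂:ℤ) := by linarith
      exact_mod_cast this
    have hcard : S.card ≤ T.card := Finset.card_le_card_of_injOn f hmap hinj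
    have hTcard : T.card = (2*N+1).toNat * (g+1) := by
      rw [hT, Finset.card_product, Finset.card_range, Int.card_Icc]
      congr 2
      omega
    have hNle : (N:ℝ) * g ≤ 2*η*a := by
      rw [← le_div_iff₀ hg']
      exact Int.floor_le _
    have hN0' : (0:ℝ) ≤ (N:ℝ) := by exact_mod_cast hN0
    have hg1 : (1:ℝ) ≤ (g:ℝ) := by exact_mod_cast hg
    calc (S.card : ℝ) ≤ (T.card : ℝ) := by exact_mod_cast hcard
      _ = (2*(N:ℝ)+1) * ((g:ℝ)+1) := by
          rw [hTcard]
          have h9 : (((2*N+1).toNat : ℕ) : ℝ) = 2*(N:ℝ)+1 := by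
            have h10 : (((2*N+1).toNat : ℕ) : ℤ) = 2*N+1 := Int.toNat_of_nonneg (by omega)
            exact_mod_cast h10
          rw [Nat.cast_mul, h9]
          push_cast
          ring
      _ ≤ 12 * ((g:ℝ) + 2*a*η) := by
          nlinarith [mul_nonneg hN0' (sub_nonneg.mpr hg1), mul_nonneg hη0.le ha'.le]
  · -- coverage
    intro x hx
    have hxF : x ∈ F := hx
    obtain ⟨⟨hx0, hx1⟩, hax, hbx⟩ := hx
    set k0 := round ((a:ℝ)*x) with hk0
    have h1 : |(a:ℝ)*x - k0| < ρ := hax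
    have habs := abs_lt.mp h1
    have hk0nn : (0:ℤ) ≤ k0 := by
      have h2 : (-1:ℝ) < (k0:ℝ) := by nlinarith
      have : (-1:ℤ) < k0 := by exact_mod_cast h2
      omega
    have hk0le : k0 ≤ (a:ℤ) := by
      have h2 : (k0:ℝ) < (a:ℝ) + 1 := by nlinarith
      have : k0 < (a:ℤ) + 1 := by exact_mod_cast h2
      omega
    set k := k0.toNat with hkdef
    have hkcast : ((k:ℕ):ℝ) = (k0:ℝ) := by
      have : ((k:ℕ):ℤ) = k0 := Int.toNat_of_nonneg hk0nn
      exact_mod_cast this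
    have hkle : k ≤ a := by
      have : ((k:ℕ):ℤ) = k0 := Int.toNat_of_nonneg hk0nn
      omega
    have hkS : k ∈ S := by
      rw [hSdef]
      refine Finset.mem_filter.mpr ⟨Finset.mem_range.mpr (by omega), ⟨x, hxF, ?_⟩⟩
      rw [hkcast]; exact h1
    refine Set.mem_iUnion.mpr ⟨S.equivFin ⟨k, hkS⟩, ?_⟩
    simp only [Equiv.symm_apply_apply]
    have habs' : -ρ < (a:ℝ)*x - k ∧ (a:ℝ)*x - k < ρ := by
      rw [hkcast]; exact habs
    constructor
    · rw [← sub_div, div_le_iff₀ ha']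
      nlinarith [habs'.2]
    · have heq : ((k:ℕ):ℝ)/a - ρ/a + 2*(ρ/a) = (((k:ℕ):ℝ) + ρ)/a := by ring
      rw [heq, le_div_iff₀ ha']
      nlinarith [habs'.1]

theorem stmt7 (a b : ℕ) (ha : 0 < a) (hb : 0 < b)
    (ρ η : ℝ) (hρ : ρ ∈ Ioo (0 : ℝ) 1) (hη : η ∈ Ioo (0 : ℝ) 1) :
    ∃ (k : ℕ) (c : Fin k → ℝ),
      (k : ℝ) ≤ 12 * ((Nat.gcd a b : ℝ) + 2 * (a : ℝ) * (b : ℝ) * max (ρ / a) (η / b)) ∧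
      {x : ℝ | x ∈ Icc (0 : ℝ) 1 ∧ nint ((a : ℝ) * x) < ρ ∧ nint ((b : ℝ) * x) < η} ⊆
        ⋃ i, Icc (c i) (c i + 2 * min (ρ / a) (η / b)) := by
  have ha' : (0:ℝ) < a := by exact_mod_cast ha
  have hb' : (0:ℝ) < b := by exact_mod_cast hb
  rcases le_total (ρ / a) (η / b) with h | h
  · obtain ⟨k, c, hk, hc⟩ := cover_aux a b ha hb ρ η hρ hη h
    refine ⟨k, c, ?_, ?_⟩
    · rw [max_eq_right h]
      have : 2 * (a : ℝ) * (b : ℝ) * (η / b) = 2 * a * η := by field_simp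
      rw [this]; exact hk
    · rw [min_eq_left h]; exact hc
  · obtain ⟨k, c, hk, hc⟩ := cover_aux b a hb ha η ρ hη hρ h
    refine ⟨k, c, ?_, ?_⟩
    · rw [max_eq_left h, Nat.gcd_comm a b]
      have : 2 * (a : ℝ) * (b : ℝ) * (ρ / a) = 2 * b * ρ := by field_simp
      rw [this]; exact hk
    · rw [min_eq_right h]
      intro x hx
      exact hc ⟨hx.1, hx.2.2, hx.2.1⟩
end

section
/- Let A = {a_n}, B = {b_n} be two sequences of positive integers, ψ, φ: ℕ → (0,1) two positive functions, and s ∈ (0,1]. Define S_{A,B}(ψ,φ) = { x ∈ [0,1] : ‖a_n x‖ < ψ(n) and ‖b_n x‖ < φ(n) for infinitely many n ∈ ℕ }. If Σ_{n=1}^∞ [ gcd(a_n,b_n) + a_n b_n · max{ψ(n)/a_n, φ(n)/b_n} ] · min{ψ(n)/a_n, φ(n)/b_n}^s < ∞, then the s-dimensional Hausdorff measure of S_{A,B}(ψ,φ) is zero. -/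
open MeasureTheory Filter Set

open Topology
open scoped ENNReal


lemma nint_le_s12 (x : ℝ) (q : ℤ) : nint x ≤ |x - q| := round_le x q

lemma count_lemma (a b : ℕ) (ha : 0 < a) (hb : 0 < b) (ε : ℝ) (hε : 0 ≤ ε) :
    (((Finset.range (a+1)).filter (fun p : ℕ => nint ((b : ℝ) * (p:ℝ) / a) < ε)).card : ℝ)
      ≤ (2 * (ε * a / (Nat.gcd a b)) + 1) * ((Nat.gcd a b : ℝ) + 1) := by
  classical
  set g := Nat.gcd a b with hgdef
  have hg : 0 < g := Nat.gcd_pos_of_pos_left _ ha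
  have hgR : (0:ℝ) < g := by exact_mod_cast hg
  have haR : (0:ℝ) < a := by exact_mod_cast ha
  set a' := a / g with ha'def
  have hga : g ∣ a := Nat.gcd_dvd_left a b
  have hgb : g ∣ b := Nat.gcd_dvd_right a b
  have ha' : 0 < a' := Nat.div_pos (Nat.le_of_dvd ha hga) hg
  set K : ℤ := ⌊ε * a / g⌋ with hKdef
  have hK0 : 0 ≤ K := Int.floor_nonneg.2 (by positivity)
  set T := (Finset.range (a+1)).filter (fun p : ℕ => nint ((b : ℝ) * (p:ℝ) / a) < ε) with hT
  -- key facts for members of T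
  have key : ∀ p ∈ T, (g:ℤ) ∣ ((b:ℤ) * p - round ((b:ℝ) * p / a) * a) ∧
      |((b:ℤ) * p - round ((b:ℝ) * p / a) * a)| ≤ K * g ∧ p ≤ a := by
    intro p hp
    simp only [hT, Finset.mem_filter, Finset.mem_range] at hp
    obtain ⟨hpa, hpd⟩ := hp
    set q : ℤ := round ((b:ℝ) * p / a) with hq
    have hdvd : (g:ℤ) ∣ ((b:ℤ) * p - q * a) :=
      dvd_sub (Dvd.dvd.mul_right (Int.natCast_dvd_natCast.2 hgb) _)
        (Dvd.dvd.mul_left (Int.natCast_dvd_natCast.2 hga) _)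
    refine ⟨hdvd, ?_, Nat.lt_succ_iff.1 hpa⟩
    have h1 : (|((b:ℤ) * p - q * a : ℤ)| : ℝ) ≤ ε * a := by
      push_cast
      have he : ((b:ℝ) * p - q * a) = ((b:ℝ) * p / a - q) * a := by field_simp
      rw [he, abs_mul, abs_of_pos haR]
      have := hpd.le
      unfold nint at this
      nlinarith [abs_nonneg ((b:ℝ) * (p:ℝ) / (a:ℝ) - (q:ℝ))]
    -- |X| ≤ εa, g ∣ X ⇒ |X| ≤ K*g : since |X|/g ≤ εa/g and |X|/g integer
    have hdvdabs : (g:ℤ) ∣ |((b:ℤ) * p - q * a)| := (dvd_abs _ _).mpr hdvd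
    obtain ⟨c, hc⟩ := hdvdabs
    have hc0 : 0 ≤ c := nonneg_of_mul_nonneg_right (hc ▸ abs_nonneg _) (by exact_mod_cast hg)
    have hcK : c ≤ K := by
      rw [hKdef, Int.le_floor]
      have h2 : ((g:ℝ) * c) ≤ ε * a := by
        calc (g:ℝ) * c = ((|((b:ℤ)*p - q*a)| : ℤ) : ℝ) := by rw [hc]; push_cast; ring
          _ = |(((b:ℤ)*p - q*a : ℤ) : ℝ)| := by push_cast; ring
          _ ≤ ε * a := h1
      rw [le_div_iff₀ hgR]
      push_cast
      linarith
    rw [hc]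
    calc (g:ℤ) * c ≤ g * K := by
          exact mul_le_mul_of_nonneg_left hcK (by positivity)
      _ = K * g := mul_comm _ _
  have hcard : T.card ≤ ((Finset.Icc (-K) K) ×ˢ (Finset.range (g+1))).card := by
    apply Finset.card_le_card_of_injOn
      (f := fun p : ℕ => ((((b:ℤ) * p - round ((b:ℝ) * p / a) * a) / g : ℤ), p / a'))
    · intro p hp
      obtain ⟨hdvd, habs, hpa⟩ := key p hp
      simp only [Finset.mem_coe, Finset.mem_product, Finset.mem_Icc, Finset.mem_range]
      constructor
      · obtain ⟨c, hc⟩ := hdvd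
        have hgz : (0:ℤ) < g := by exact_mod_cast hg
        have hXg : ((b:ℤ) * p - round ((b:ℝ) * p / a) * a) / g = c := by
          rw [hc]; exact Int.mul_ediv_cancel_left _ hgz.ne'
        rw [hXg]
        rw [hc, abs_mul, abs_of_nonneg hgz.le] at habs
        have hcK : |c| ≤ K := by nlinarith [abs_nonneg c]
        exact abs_le.1 hcK
      · have : p / a' ≤ a / a' := Nat.div_le_div_right hpa
        have h2 : a / a' = g := Nat.div_div_self hga ha.ne'
        omega
    · intro p1 h1 p2 h2 heq
      obtain ⟨hdvd1, -, hpa1⟩ := key p1 h1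
      obtain ⟨hdvd2, -, hpa2⟩ := key p2 h2
      simp only [Prod.mk.injEq] at heq
      obtain ⟨hfst, hsnd⟩ := heq
      set q1 : ℤ := round ((b:ℝ) * p1 / a)
      set q2 : ℤ := round ((b:ℝ) * p2 / a)
      have hX : (b:ℤ) * p1 - q1 * a = (b:ℤ) * p2 - q2 * a := by
        have e1 := Int.ediv_mul_cancel hdvd1
        have e2 := Int.ediv_mul_cancel hdvd2
        rw [← e1, ← e2, hfst]
      -- b (p1 - p2) = a (q1 - q2)
      have hmul : (b:ℤ) * ((p1:ℤ) - p2) = (a:ℤ) * (q1 - q2) := by linarith [hX]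
      -- divide by g
      obtain ⟨A, hA⟩ := hga
      obtain ⟨B, hB⟩ := hgb
      have hAa' : A = a' := by rw [ha'def, hA, Nat.mul_div_cancel_left _ hg]
      have hcop : Nat.Coprime a' (b / g) := Nat.coprime_div_gcd_div_gcd hg
      have hBb' : B = b / g := by rw [hB, Nat.mul_div_cancel_left _ hg]
      have hmul2 : (B:ℤ) * ((p1:ℤ) - p2) = (A:ℤ) * (q1 - q2) := by
        have : (g:ℤ) * ((B:ℤ) * ((p1:ℤ) - p2)) = (g:ℤ) * ((A:ℤ) * (q1 - q2)) := by
          have hb' : (b:ℤ) = g * B := by exact_mod_cast hB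
          have ha'' : (a:ℤ) = g * A := by exact_mod_cast hA
          rw [← mul_assoc, ← mul_assoc, ← hb', ← ha'']; exact hmul
        exact mul_left_cancel₀ (by exact_mod_cast hg.ne') this
      have hdvdp : (A:ℤ) ∣ ((p1:ℤ) - p2) := by
        have hco : IsCoprime (A:ℤ) (B:ℤ) := by
          rw [Int.isCoprime_iff_gcd_eq_one]
          rw [hAa', hBb']
          exact_mod_cast hcop
        exact hco.dvd_of_dvd_mul_left ⟨q1 - q2, by linarith [hmul2]⟩
      -- same quotient and divisibility ⇒ equal
      rw [hAa'] at hdvdp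
      have hmod : (p1:ℤ) % a' = (p2:ℤ) % a' :=
        Int.modEq_iff_dvd.mpr (by simpa using (dvd_neg.2 hdvdp))
      have hmodN : p1 % a' = p2 % a' := by
        have := hmod; push_cast at this; exact_mod_cast this
      have e1 := Nat.div_add_mod p1 a'
      have e2 := Nat.div_add_mod p2 a'
      rw [hsnd, hmodN] at e1
      omega
  have hcardIcc : (Finset.Icc (-K) K).card = (2*K+1).toNat := by
    rw [Int.card_Icc]; congr 1; ring
  calc (T.card : ℝ) ≤ ((Finset.Icc (-K) K ×ˢ Finset.range (g+1)).card : ℝ) := by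
        exact_mod_cast hcard
    _ = (((2*K+1).toNat : ℤ) : ℝ) * ((g:ℝ)+1) := by
        rw [Finset.card_product, hcardIcc, Finset.card_range]; push_cast; ring
    _ ≤ (2 * (ε*a/g) + 1) * ((g:ℝ)+1) := by
        have hKle : (K:ℝ) ≤ ε*a/g := Int.floor_le _
        have htn : (((2*K+1).toNat : ℤ) : ℝ) = ((2*K+1 : ℤ) : ℝ) := by
          rw [Int.toNat_of_nonneg (by linarith)]
        rw [htn]
        push_cast
        have hK0R : (0:ℝ) ≤ K := by exact_mod_cast hK0
        nlinarith [hgR]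

lemma nint_le_add (x y : ℝ) : nint x ≤ nint y + |x - y| := by
  calc nint x ≤ |x - (round y : ℝ)| := nint_le_s12 x (round y)
    _ ≤ |x - y| + |y - (round y : ℝ)| := abs_sub_le x y _
    _ = nint y + |x - y| := by rw [nint]; ring

lemma cover_one_s12 (a b : ℕ) (ha : 0 < a) (hb : 0 < b) (ψ φ : ℝ)
    (hψ0 : 0 < ψ) (hψ1 : ψ < 1) (hφ0 : 0 < φ) (hφ1 : φ < 1) (hle : ψ / a ≤ φ / b) :
    ∃ T : Finset ℕ,
      ((T.card : ℝ) ≤ 2 * (Nat.gcd a b : ℝ) + 8 * a * b * (φ / b)) ∧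
      ∀ x ∈ Icc (0:ℝ) 1, nint ((a:ℝ) * x) < ψ → nint ((b:ℝ) * x) < φ →
        ∃ p ∈ T, |x - (p:ℝ)/a| ≤ ψ / a := by
  classical
  have haR : (0:ℝ) < a := by exact_mod_cast ha
  have hbR : (0:ℝ) < b := by exact_mod_cast hb
  set ε : ℝ := φ + b * ψ / a with hε
  have hε0 : 0 ≤ ε := by positivity
  refine ⟨(Finset.range (a+1)).filter (fun p : ℕ => nint ((b : ℝ) * (p:ℝ) / a) < ε), ?_, ?_⟩
  · have hcount := count_lemma a b ha hb ε hε0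
    refine hcount.trans ?_
    set g := Nat.gcd a b
    have hg : 0 < g := Nat.gcd_pos_of_pos_left _ ha
    have hgR : (1:ℝ) ≤ g := by exact_mod_cast hg
    have hεa : ε * a ≤ 2 * a * b * (φ / b) := by
      have hcross : ψ * b ≤ φ * a := by
        rw [div_le_div_iff₀ haR hbR] at hle; linarith
      have : ε * a = φ * a + b * ψ := by rw [hε]; field_simp [haR.ne']
      rw [this]
      have : 2 * a * b * (φ / b) = 2 * (φ * a) := by
        field_simp [hbR.ne']
      rw [this]; linarith
    have hεa0 : 0 ≤ ε * a := by positivity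
    have hgR0 : (0:ℝ) < g := by linarith
    have h1 : ε * a / g ≤ ε * a := by
      rw [div_le_iff₀ hgR0]
      nlinarith
    have h2 : ε * a / g * g = ε * a := by field_simp
    nlinarith [hεa0, hgR, h1, h2, hεa]
  · intro x hx h1 h2
    set P : ℤ := round ((a:ℝ) * x) with hP
    have hax0 : 0 ≤ (a:ℝ) * x := by
      have := hx.1; positivity
    have hax1 : (a:ℝ) * x ≤ a := by
      nlinarith [hx.2]
    have habs := abs_sub_round ((a:ℝ) * x)
    have hP0 : 0 ≤ P := by
      by_contra h
      push_neg at h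
      have h' : P ≤ -1 := by omega
      have : (P:ℝ) ≤ -1 := by exact_mod_cast h'
      rw [abs_le] at habs; linarith
    have hPa : P ≤ (a:ℤ) := by
      by_contra h
      push_neg at h
      have h' : (a:ℤ) + 1 ≤ P := by omega
      have : ((a:ℝ)) + 1 ≤ (P:ℝ) := by exact_mod_cast h'
      rw [abs_le] at habs; linarith
    set p : ℕ := P.toNat with hp
    have hpP : (p:ℝ) = (P:ℝ) := by
      rw [hp]; exact_mod_cast Int.toNat_of_nonneg hP0
    have hpa : p ≤ a := by omega
    have hdist : |x - (p:ℝ)/a| < ψ / a := by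
      rw [lt_div_iff₀ haR]
      calc |x - (p:ℝ)/a| * a = |(a:ℝ) * x - P| := by
            rw [← abs_of_pos haR, ← abs_mul]
            congr 1
            rw [← hpP]
            field_simp [haR.ne']
            rw [abs_of_pos haR]
            ring
        _ < ψ := h1
    refine ⟨p, ?_, hdist.le⟩
    simp only [Finset.mem_filter, Finset.mem_range]
    refine ⟨by omega, ?_⟩
    calc nint ((b:ℝ) * p / a) ≤ nint ((b:ℝ) * x) + |(b:ℝ) * p / a - (b:ℝ) * x| :=
          nint_le_add _ _
      _ < φ + b * ψ / a := by
          have habs2 : |(b:ℝ) * p / a - (b:ℝ) * x| = b * |x - (p:ℝ)/a| := by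
            rw [← abs_of_pos hbR, ← abs_mul, ← abs_neg]
            congr 1
            field_simp
            rw [abs_of_pos hbR]
            ring
          rw [habs2]
          have : (b:ℝ) * |x - (p:ℝ)/a| < b * (ψ/a) :=
            mul_lt_mul_of_pos_left hdist hbR
          have h4 : (b:ℝ) * (ψ/a) = b * ψ / a := by ring
          linarith [h2]
      _ = ε := hε.symm

theorem stmt12 (a b : ℕ → ℕ) (ha : ∀ n, 0 < a n) (hb : ∀ n, 0 < b n)
    (ψ φ : ℕ → ℝ) (hψ : ∀ n, ψ n ∈ Ioo (0 : ℝ) 1) (hφ : ∀ n, φ n ∈ Ioo (0 : ℝ) 1)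
    (s : ℝ) (hs0 : 0 < s) (hs1 : s ≤ 1)
    (hsum : Summable (fun n =>
      ((Nat.gcd (a n) (b n) : ℝ)
          + (a n : ℝ) * (b n : ℝ) * max (ψ n / (a n : ℝ)) (φ n / (b n : ℝ)))
        * min (ψ n / (a n : ℝ)) (φ n / (b n : ℝ)) ^ s)) :
    μH[s] {x : ℝ | x ∈ Icc (0 : ℝ) 1 ∧
        ∃ᶠ n in atTop, nint ((a n : ℝ) * x) < ψ n ∧ nint ((b n : ℝ) * x) < φ n} = 0 := by
  classical
  set m : ℕ → ℝ := fun n => min (ψ n / (a n : ℝ)) (φ n / (b n : ℝ)) with hm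
  set Mx : ℕ → ℝ := fun n => max (ψ n / (a n : ℝ)) (φ n / (b n : ℝ)) with hMx
  set u : ℕ → ℝ := fun n =>
    ((Nat.gcd (a n) (b n) : ℝ) + (a n : ℝ) * (b n : ℝ) * Mx n) * m n ^ s with hu
  have hsum' : Summable u := hsum
  have haR : ∀ n, (0:ℝ) < a n := fun n => by exact_mod_cast ha n
  have hbR : ∀ n, (0:ℝ) < b n := fun n => by exact_mod_cast hb n
  have hm0 : ∀ n, 0 < m n := fun n =>
    lt_min (div_pos (hψ n).1 (haR n)) (div_pos (hφ n).1 (hbR n))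
  have hMm : ∀ n, m n ≤ Mx n := fun n => min_le_max
  have hg1 : ∀ n, (1:ℝ) ≤ (Nat.gcd (a n) (b n) : ℝ) := fun n => by
    exact_mod_cast Nat.gcd_pos_of_pos_left _ (ha n)
  have hu0 : ∀ n, 0 ≤ u n := fun n => by
    have := hm0 n; have := hg1 n; have := haR n; have := hbR n
    have hMx0 : 0 ≤ Mx n := le_trans (hm0 n).le (hMm n)
    have : (0:ℝ) ≤ m n ^ s := Real.rpow_nonneg (hm0 n).le s
    positivity
  -- m tends to zero
  have hmu : ∀ n, m n ^ s ≤ u n := by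
    intro n
    have hrn : (0:ℝ) ≤ m n ^ s := Real.rpow_nonneg (hm0 n).le s
    have hco : (1:ℝ) ≤ (Nat.gcd (a n) (b n) : ℝ) + (a n : ℝ) * (b n : ℝ) * Mx n := by
      have hMx0 : 0 ≤ Mx n := le_trans (hm0 n).le (hMm n)
      have h5 : (0:ℝ) ≤ (a n : ℝ) * (b n : ℝ) * Mx n := by positivity
      linarith [hg1 n]
    calc m n ^ s = 1 * m n ^ s := (one_mul _).symm
      _ ≤ _ := mul_le_mul_of_nonneg_right hco hrn
  have hms_tendsto : Tendsto (fun n => m n ^ s) atTop (𝓝 0) := by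
    apply squeeze_zero (fun n => Real.rpow_nonneg (hm0 n).le s) hmu
    exact hsum'.tendsto_atTop_zero
  have hm_tendsto : Tendsto m atTop (𝓝 0) := by
    have hc : ContinuousAt (fun y : ℝ => y ^ s⁻¹) 0 :=
      Real.continuousAt_rpow_const 0 s⁻¹ (Or.inr (by positivity))
    have := (hc.tendsto.comp hms_tendsto)
    rw [Real.zero_rpow (inv_ne_zero hs0.ne')] at this
    convert this using 1
    funext n
    show m n = ((fun y : ℝ => y ^ s⁻¹) ∘ fun n => m n ^ s) n
    simp only [Function.comp_apply]
    rw [← Real.rpow_mul (hm0 n).le, mul_inv_cancel₀ hs0.ne', Real.rpow_one]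
  -- per-n covers
  have hcover : ∀ n, ∃ (T : Finset ℕ) (c : ℕ → ℝ),
      ((T.card : ℝ) ≤ 2 * (Nat.gcd (a n) (b n) : ℝ) + 8 * (a n : ℝ) * (b n : ℝ) * Mx n) ∧
      ∀ x ∈ Icc (0:ℝ) 1, nint ((a n : ℝ) * x) < ψ n → nint ((b n : ℝ) * x) < φ n →
        ∃ p ∈ T, |x - c p| ≤ m n := by
    intro n
    rcases le_total (ψ n / (a n : ℝ)) (φ n / (b n : ℝ)) with hle | hle
    · obtain ⟨T, hT1, hT2⟩ := cover_one_s12 (a n) (b n) (ha n) (hb n) (ψ n) (φ n)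
        (hψ n).1 (hψ n).2 (hφ n).1 (hφ n).2 hle
      refine ⟨T, fun p => (p:ℝ)/(a n : ℝ), ?_, ?_⟩
      · have : Mx n = φ n / (b n : ℝ) := max_eq_right hle
        rw [this]; exact hT1
      · intro x hx h1 h2
        have hmn : m n = ψ n / (a n : ℝ) := min_eq_left hle
        rw [hmn]; exact hT2 x hx h1 h2
    · obtain ⟨T, hT1, hT2⟩ := cover_one_s12 (b n) (a n) (hb n) (ha n) (φ n) (ψ n)
        (hφ n).1 (hφ n).2 (hψ n).1 (hψ n).2 hle
      refine ⟨T, fun p => (p:ℝ)/(b n : ℝ), ?_, ?_⟩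
      · have h1 : Mx n = ψ n / (a n : ℝ) := max_eq_left hle
        have h2 : (Nat.gcd (b n) (a n) : ℝ) = (Nat.gcd (a n) (b n) : ℝ) := by
          rw [Nat.gcd_comm]
        rw [h1]
        rw [h2] at hT1
        calc (T.card : ℝ) ≤ 2 * (Nat.gcd (a n) (b n) : ℝ)
              + 8 * (b n : ℝ) * (a n : ℝ) * (ψ n / (a n : ℝ)) := hT1
          _ = 2 * (Nat.gcd (a n) (b n) : ℝ)
              + 8 * (a n : ℝ) * (b n : ℝ) * (ψ n / (a n : ℝ)) := by ring
      · intro x hx h1 h2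
        have hmn : m n = φ n / (b n : ℝ) := min_eq_right hle
        rw [hmn]; exact hT2 x hx h2 h1
  choose T c hTcard hTcover using hcover
  -- the covering families
  set t : ℕ → ℕ × ℕ → Set ℝ := fun N jp =>
    if jp.2 ∈ T (jp.1 + N) then
      Metric.closedBall (c (jp.1 + N) jp.2) (m (jp.1 + N)) else ∅ with ht_def
  set v : ℕ → ℝ≥0∞ := fun n => ENNReal.ofReal (2 * m n) with hv_def
  set r : ℕ → ℝ≥0∞ := fun N => ⨆ j, v (j + N) with hr_def
  have hdiam : ∀ n p, Metric.ediam (Metric.closedBall (c n p) (m n)) = v n := by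
    intro n p
    rw [Real.closedBall_eq_Icc, Real.ediam_Icc]
    congr 1; ring
  have ht : ∀ N, ∀ i : ℕ × ℕ, Metric.ediam (t N i) ≤ r N := by
    intro N ⟨j, p⟩
    by_cases hp : p ∈ T (j + N)
    · rw [ht_def]; simp only [hp, if_true]
      rw [hdiam]
      exact le_iSup (fun j => v (j + N)) j
    · rw [ht_def]; simp only [hp, if_false]
      rw [Metric.ediam_empty]; exact zero_le
  have hv_tendsto : Tendsto v atTop (𝓝 0) := by
    have : Tendsto (fun n => 2 * m n) atTop (𝓝 (2 * 0)) := hm_tendsto.const_mul 2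
    rw [mul_zero] at this
    have h2 := ENNReal.tendsto_ofReal (a := 0) this
    rwa [ENNReal.ofReal_zero] at h2
  have hr_tendsto : Tendsto r atTop (𝓝 0) := by
    have hanti : Antitone r := by
      intro N N' hNN'
      refine iSup_le fun j => ?_
      have he : N' - N + j + N = j + N' := by omega
      calc v (j + N') = v (N' - N + j + N) := by rw [he]
        _ ≤ ⨆ i, v (i + N) := le_iSup (fun i => v (i + N)) _
    have h1 := tendsto_atTop_iInf hanti
    have h2 : (⨅ N, r N) = 0 := by
      have := hv_tendsto.limsup_eq
      rw [limsup_eq_iInf_iSup_of_nat'] at this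
      exact this
    rwa [h2] at h1
  -- the cover property
  set S := {x : ℝ | x ∈ Icc (0 : ℝ) 1 ∧
      ∃ᶠ n in atTop, nint ((a n : ℝ) * x) < ψ n ∧ nint ((b n : ℝ) * x) < φ n} with hS
  have hst : ∀ N, S ⊆ ⋃ i : ℕ × ℕ, t N i := by
    intro N x hx
    obtain ⟨hx01, hfreq⟩ := hx
    obtain ⟨n, hnN, h1, h2⟩ := (frequently_atTop.1 hfreq) N
    obtain ⟨p, hpT, hpd⟩ := hTcover n x hx01 h1 h2
    refine mem_iUnion.2 ⟨(n - N, p), ?_⟩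
    have he : n - N + N = n := Nat.sub_add_cancel hnN
    rw [ht_def]
    simp only [he, hpT, if_true]
    rw [Metric.mem_closedBall, Real.dist_eq]
    exact hpd
  -- sum bound
  set U : ℕ → ℝ≥0∞ := fun n => ENNReal.ofReal (16 * u n) with hU_def
  have hU16 : Summable (fun n => 16 * u n) := hsum'.mul_left 16
  have hUsum : ∑' n, U n ≠ ⊤ := by
    rw [← ENNReal.ofReal_tsum_of_nonneg (fun n => by linarith [hu0 n]) hU16]
    exact ENNReal.ofReal_ne_top
  have hbound : ∀ N, (∑' i : ℕ × ℕ, Metric.ediam (t N i) ^ s) ≤ ∑' j, U (j + N) := by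
    intro N
    rw [ENNReal.tsum_prod']
    refine ENNReal.tsum_le_tsum fun j => ?_
    -- inner sum over p
    set n := j + N with hn
    have hzero : ∀ p ∉ T n, Metric.ediam (t N (j, p)) ^ s = 0 := by
      intro p hp
      rw [ht_def]
      rw [hn] at hp
      simp only [hp, if_false]
      rw [Metric.ediam_empty]
      exact ENNReal.zero_rpow_of_pos hs0
    rw [tsum_eq_sum hzero]
    have hterm : ∀ p ∈ T n, Metric.ediam (t N (j, p)) ^ s ≤ ENNReal.ofReal ((2 * m n) ^ s) := by
      intro p hp
      rw [ht_def]
      rw [hn] at hp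
      simp only [hp, if_true]
      rw [hdiam, hv_def]
      rw [ENNReal.ofReal_rpow_of_nonneg (by linarith [hm0 n]) hs0.le]
    calc (∑ p ∈ T n, Metric.ediam (t N (j, p)) ^ s)
        ≤ ∑ p ∈ T n, ENNReal.ofReal ((2 * m n) ^ s) := Finset.sum_le_sum hterm
      _ = (T n).card * ENNReal.ofReal ((2 * m n) ^ s) := by
          rw [Finset.sum_const, nsmul_eq_mul]
      _ ≤ U n := by
          rw [hU_def]
          have hcn : ((T n).card : ℝ≥0∞) = ENNReal.ofReal ((T n).card : ℝ) := by
            rw [ENNReal.ofReal_natCast]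
          rw [hcn, ← ENNReal.ofReal_mul (by positivity)]
          apply ENNReal.ofReal_le_ofReal
          -- real inequality
          have hms : (0:ℝ) ≤ m n ^ s := Real.rpow_nonneg (hm0 n).le s
          have h2s : (2 * m n) ^ s = 2 ^ s * m n ^ s :=
            Real.mul_rpow (by norm_num) (hm0 n).le
          have h2s2 : (2:ℝ) ^ s ≤ 2 := by
            calc (2:ℝ) ^ s ≤ 2 ^ (1:ℝ) :=
                  Real.rpow_le_rpow_of_exponent_le one_le_two hs1
              _ = 2 := Real.rpow_one 2
          have hcard := hTcard n
          have hMx0 : 0 ≤ Mx n := le_trans (hm0 n).le (hMm n)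
          have hab : (0:ℝ) ≤ (a n : ℝ) * (b n : ℝ) * Mx n := by positivity
          have h2s0 : (0:ℝ) ≤ 2 ^ s := by positivity
          have hcard0 : (0:ℝ) ≤ (T n).card := Nat.cast_nonneg _
          rw [h2s, hu]
          have key : ((T n).card : ℝ) * (2 ^ s * m n ^ s)
              ≤ (2 * (Nat.gcd (a n) (b n) : ℝ) + 8 * (a n : ℝ) * (b n : ℝ) * Mx n)
                * (2 * m n ^ s) := by
            have hstep := mul_le_mul_of_nonneg_right hcard
              (by positivity : (0:ℝ) ≤ 2 ^ s * m n ^ s)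
            have hcoef0 : (0:ℝ) ≤ 2 * (Nat.gcd (a n) (b n) : ℝ)
                + 8 * (a n : ℝ) * (b n : ℝ) * Mx n := by
              nlinarith [hg1 n, hab]
            have h6 : (2 * (Nat.gcd (a n) (b n) : ℝ) + 8 * (a n : ℝ) * (b n : ℝ) * Mx n)
                  * (2 ^ s * m n ^ s)
                ≤ (2 * (Nat.gcd (a n) (b n) : ℝ) + 8 * (a n : ℝ) * (b n : ℝ) * Mx n)
                  * (2 * m n ^ s) :=
              mul_le_mul_of_nonneg_left (mul_le_mul_of_nonneg_right h2s2 hms) hcoef0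
            exact hstep.trans h6
          calc ((T n).card : ℝ) * (2 ^ s * m n ^ s)
              ≤ (2 * (Nat.gcd (a n) (b n) : ℝ) + 8 * (a n : ℝ) * (b n : ℝ) * Mx n)
                * (2 * m n ^ s) := key
            _ ≤ 16 * (((Nat.gcd (a n) (b n) : ℝ) + (a n : ℝ) * (b n : ℝ) * Mx n) * m n ^ s) := by
                nlinarith [hg1 n, hms, hab]
  -- put it together
  have hH := Measure.hausdorffMeasure_le_liminf_tsum s S r hr_tendsto t
    (Eventually.of_forall ht) (Eventually.of_forall hst)
  have hlim : Tendsto (fun N => ∑' j, U (j + N)) atTop (𝓝 0) :=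
    ENNReal.tendsto_sum_nat_add U hUsum
  have hfinal : μH[s] S ≤ 0 := by
    refine hH.trans ?_
    calc liminf (fun N => ∑' i : ℕ × ℕ, Metric.ediam (t N i) ^ s) atTop
        ≤ liminf (fun N => ∑' j, U (j + N)) atTop :=
          liminf_le_liminf (Eventually.of_forall hbound)
      _ = 0 := hlim.liminf_eq
  exact le_antisymm hfinal zero_le
end
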